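/- arXiv:2109.10130 — 6 statements merged into one kernel-verified Lean document; each statement's English description precedes it below -/
import Mathlib

section
/- Let K be a field, let n ≥ 1 be a natural number and let g ∈ K. Then the binomial x^n − g is irreducible over K if and only if both of the following hold: (1) for every prime p dividing n, g is not a p-th power in K (i.e. g ∉ K^p), and (2) if 4 divides n, then g is not of the form −4h^4 for any h ∈ K (i.e. g ∉ −4K^4). -/
open Polynomial IntermediateField

universe u

section Aux

/-- Key lemma: if `x` has minimal polynomial `X ^ 2 - C a` over `K` and `a ∉ -4K⁴`,
then `ε • gen` is not a square in `K⟮x⟯` for `ε` with `ε ^ 2 = 1`. -/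
lemma aux_not_sq {K : Type u} [Field K] {L : Type u} [Field L] [Algebra K L] {a : K} {x : L}
    (hx : minpoly K x = X ^ 2 - C a) (ha : ¬ ∃ h : K, a = -4 * h ^ 4)
    (ε : K) (hε : ε ^ 2 = 1) (β : K⟮x⟯) :
    β ^ 2 ≠ algebraMap K K⟮x⟯ ε * AdjoinSimple.gen K x := by
  have hne : (X ^ 2 - C a : K[X]) ≠ 0 := X_pow_sub_C_ne_zero (by norm_num) a
  have hint : IsIntegral K x := by
    by_contra h
    exact hne (hx ▸ minpoly.eq_zero h)
  set g : K⟮x⟯ := AdjoinSimple.gen K x with hgdef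
  have hg : minpoly K g = X ^ 2 - C a := by rw [minpoly_gen]; exact hx
  have hg2 : g ^ 2 = algebraMap K K⟮x⟯ a := by
    have h0 := minpoly.aeval K g
    rw [hg] at h0
    simpa [sub_eq_zero] using h0
  -- linear independence of 1 and g
  have hli : ∀ c d : K, algebraMap K K⟮x⟯ c + algebraMap K K⟮x⟯ d * g = 0 → c = 0 ∧ d = 0 := by
    intro c d h
    by_cases hd : d = 0
    · subst hd
      simp only [map_zero, zero_mul, add_zero] at h
      exact ⟨(algebraMap K K⟮x⟯).injective (by simpa using h), rfl⟩
    · exfalso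
      have hd0 : algebraMap K K⟮x⟯ d ≠ 0 := fun h' => hd ((algebraMap K K⟮x⟯).injective (by simpa using h'))
      have hdc : d * (-(c/d)) = -c := by field_simp
      have h2 : algebraMap K K⟮x⟯ d * g = algebraMap K K⟮x⟯ d * algebraMap K K⟮x⟯ (-(c/d)) := by
        rw [← map_mul, hdc, map_neg]
        linear_combination h
      have hgc : g = algebraMap K K⟮x⟯ (-(c/d)) := mul_left_cancel₀ hd0 h2
      have hmg : minpoly K g = X - C (-(c/d)) := by rw [hgc]; exact minpoly.eq_X_sub_C _ _
      rw [hg] at hmg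
      have := congrArg natDegree hmg
      simp [natDegree_X_pow_sub_C, natDegree_X_sub_C] at this
  intro hβ
  obtain ⟨f, hdeg, rfl⟩ := (adjoin.powerBasis hint).exists_eq_aeval β
  rw [adjoin.powerBasis_dim, hx, natDegree_X_pow_sub_C] at hdeg
  have hf : f = C (f.coeff 1) * X + C (f.coeff 0) :=
    eq_X_add_C_of_natDegree_le_one (by omega)
  set u := f.coeff 0
  set v := f.coeff 1
  have hβ' : aeval (adjoin.powerBasis hint).gen f
      = algebraMap K K⟮x⟯ u + algebraMap K K⟮x⟯ v * g := by
    rw [adjoin.powerBasis_gen]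
    conv_lhs => rw [hf]
    simp [← hgdef]
    ring
  rw [hβ'] at hβ
  have h0 : algebraMap K K⟮x⟯ (u ^ 2 + a * v ^ 2)
      + algebraMap K K⟮x⟯ (2 * u * v - ε) * g = 0 := by
    simp only [map_add, map_mul, map_sub, map_pow, map_ofNat]
    linear_combination hβ - (algebraMap K K⟮x⟯ v) ^ 2 * hg2
  obtain ⟨hc, hd⟩ := hli _ _ h0
  have hd2 : 2 * u * v = ε := sub_eq_zero.mp hd
  have hε0 : ε ≠ 0 := fun h => by rw [h] at hε; simpa using hε
  have hv : v ≠ 0 := fun hv0 => hε0 (by rw [← hd2, hv0]; ring)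
  have h2 : (2 : K) ≠ 0 := fun h20 => hε0 (by rw [← hd2, h20]; ring)
  have key : (2 * u * v) ^ 2 = 1 := by rw [hd2]; exact hε
  refine ha ⟨(2 * v)⁻¹, ?_⟩
  field_simp
  linear_combination 16 * v ^ 2 * hc - 4 * key

/-- Irreducibility of `X ^ 2 ^ k - C a`. -/
lemma aux_two_pow : ∀ (k : ℕ), 1 ≤ k → ∀ (K : Type u) [Field K], ∀ (a : K),
    (¬ ∃ b : K, a = b ^ 2) → (2 ≤ k → ¬ ∃ h : K, a = -4 * h ^ 4) →
    Irreducible ((X : K[X]) ^ (2 ^ k) - C a) := by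
  intro k
  induction k with
  | zero => omega
  | succ k IH =>
    intro _ K _ a ha ha4
    have hirr2 : Irreducible ((X : K[X]) ^ 2 - C a) :=
      X_pow_sub_C_irreducible_of_prime Nat.prime_two (fun b hb => ha ⟨b, hb.symm⟩)
    rcases Nat.eq_zero_or_pos k with rfl | hk1
    · simpa using hirr2
    have h4 : ¬ ∃ h : K, a = -4 * h ^ 4 := ha4 (by omega)
    have main := X_pow_mul_sub_C_irreducible (n := 2 ^ k) (m := 2) (a := a) hirr2 ?_
    · rw [← pow_succ] at main; exact main
    intro E _ _ x hx
    apply IH hk1 K⟮x⟯ (AdjoinSimple.gen K x)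
    · rintro ⟨β, hβ⟩
      exact aux_not_sq hx h4 1 (one_pow 2) β
        (by rw [map_one, one_mul]; exact hβ.symm)
    · intro hk2
      rintro ⟨β, hβ⟩
      apply aux_not_sq hx h4 (-1) (by ring) (2 * β ^ 2)
      rw [map_neg, map_one]
      linear_combination hβ

end Aux

/-- Irreducibility criterion for binomials over an arbitrary field
(Karpilovsky, Theorem 1.6): for a field `K`, `n ≥ 1` and `g ∈ K`, the binomial
`x^n - g` is irreducible over `K` iff `g` is not a `p`-th power for each prime
`p ∣ n`, and moreover `g ∉ -4K^4` whenever `4 ∣ n`. -/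
theorem binomial_irreducible_iff {K : Type*} [Field K] (n : ℕ) (hn : 1 ≤ n) (g : K) :
    Irreducible ((X : K[X]) ^ n - C g) ↔
      (∀ p : ℕ, p.Prime → p ∣ n → ¬ ∃ h : K, g = h ^ p) ∧
        (4 ∣ n → ¬ ∃ h : K, g = -4 * h ^ 4) := by
  constructor
  · intro H
    constructor
    · rintro p hp hpn ⟨h, hh⟩
      exact pow_ne_of_irreducible_X_pow_sub_C H hpn hp.ne_one h hh.symm
    · rintro ⟨t, rfl⟩ ⟨h, hh⟩
      have ht : 1 ≤ t := by omega
      set p₁ : K[X] := X ^ (2 * t) + C (2 * h) * X ^ t + C (2 * h ^ 2) with hp₁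
      set p₂ : K[X] := X ^ (2 * t) - C (2 * h) * X ^ t + C (2 * h ^ 2) with hp₂
      have e1 : (X : K[X]) ^ (4 * t) = (X ^ t) ^ 4 := by rw [← pow_mul, mul_comm]
      have e2 : (X : K[X]) ^ (2 * t) = (X ^ t) ^ 2 := by rw [← pow_mul, mul_comm]
      have hfac : (X : K[X]) ^ (4 * t) - C g = p₁ * p₂ := by
        rw [hh, hp₁, hp₂, e1, e2]
        simp only [map_mul, map_neg, map_pow, map_ofNat]
        ring
      have hd1 : p₁.natDegree = 2 * t := by
        rw [hp₁]; compute_degree! <;> first | omega | (rw [if_neg (by omega), if_neg (by omega)]; simp)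
      have hd2 : p₂.natDegree = 2 * t := by
        rw [hp₂]; compute_degree! <;> first | omega | (rw [if_neg (by omega), if_neg (by omega)]; simp)
      rcases H.isUnit_or_isUnit hfac with hu | hu <;>
        [ (have := natDegree_eq_zero_of_isUnit hu; omega);
          (have := natDegree_eq_zero_of_isUnit hu; omega) ]
  · rintro ⟨h1, h2⟩
    obtain ⟨k, m, hm, rfl⟩ := Nat.exists_eq_two_pow_mul_odd (n := n) (by omega)
    rcases Nat.eq_zero_or_pos k with rfl | hk1
    · rw [pow_zero, one_mul] at h1 ⊢
      exact X_pow_sub_C_irreducible_of_odd hm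
        (fun p hp hpn b hb => h1 p hp hpn ⟨b, hb.symm⟩)
    have hA : Irreducible ((X : K[X]) ^ (2 ^ k) - C g) := by
      apply aux_two_pow k hk1 K g
      · rintro ⟨b, hb⟩
        exact h1 2 Nat.prime_two (Dvd.dvd.mul_right (dvd_pow_self 2 (by omega)) m) ⟨b, hb⟩
      · intro hk2
        apply h2
        exact Dvd.dvd.mul_right (by
          calc (4 : ℕ) = 2 ^ 2 := by norm_num
          _ ∣ 2 ^ k := pow_dvd_pow 2 hk2) m
    have main := X_pow_mul_sub_C_irreducible (n := m) (m := 2 ^ k) (a := g) hA ?_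
    · rwa [mul_comm] at main
    intro E _ _ x hx
    have hne : (X ^ 2 ^ k - C g : K[X]) ≠ 0 := X_pow_sub_C_ne_zero (by positivity) g
    have hint : IsIntegral K x := by
      by_contra h
      exact hne (hx ▸ minpoly.eq_zero h)
    apply X_pow_sub_C_irreducible_of_odd hm
    intro q hq hqm b hb
    have hnorm : Algebra.norm K (AdjoinSimple.gen K x) = -g := by
      rw [← IntermediateField.adjoin.powerBasis_gen hint,
        Algebra.PowerBasis.norm_gen_eq_coeff_zero_minpoly,
        IntermediateField.adjoin.powerBasis_gen, minpoly_gen, hx,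
        IntermediateField.adjoin.powerBasis_dim, hx, natDegree_X_pow_sub_C]
      have : Even (2 ^ k) := (Nat.even_pow.mpr ⟨even_iff_two_dvd.mpr dvd_rfl, by omega⟩)
      rw [this.neg_one_pow, one_mul]
      simp [coeff_X_pow, (pow_pos (by norm_num : (0:ℕ) < 2) k).ne]
    apply h1 q hq (Dvd.dvd.mul_left hqm (2 ^ k))
    refine ⟨-(Algebra.norm K b), ?_⟩
    have hq_odd : Odd q := hq.odd_of_ne_two (by
      rintro rfl
      exact (Nat.not_even_iff_odd.mpr hm) ((even_iff_two_dvd).mpr hqm))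
    rw [hq_odd.neg_pow, ← map_pow, hb, hnorm, neg_neg]
end

section
/- Let F be a finite field with q elements, let g ∈ F be nonzero, let n ≥ 2 be a natural number, and let e be the order of g in the multiplicative group F^× = F \ {0}. Then x^n − g is irreducible over F if and only if the following three conditions hold: (1) gcd((q−1)/e, n) = 1; (2) every prime divisor of n divides e; (3) if 4 divides n, then 4 divides q − 1. -/
open Polynomial
open IntermediateField

open Polynomial Finset

private lemma bin_pow_expand (c : ℤ) : ∀ n : ℕ, ∃ E : ℤ, (1 + c) ^ n = 1 + n * c + c ^ 2 * E
  | 0 => ⟨0, by ring⟩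
  | n + 1 => by
    obtain ⟨E, hE⟩ := bin_pow_expand c n
    refine ⟨E + n + c * E, ?_⟩
    rw [pow_succ, hE]
    push_cast
    ring

private lemma bin_geom_expand (c : ℤ) (n : ℕ) :
    ∃ D : ℤ, (∑ i ∈ range n, (1 + c) ^ i) =
      n + c * (∑ i ∈ range n, (i : ℤ)) + c ^ 2 * D := by
  induction n with
  | zero => exact ⟨0, by simp⟩
  | succ n ih =>
    obtain ⟨D, hD⟩ := ih
    obtain ⟨E, hE⟩ := bin_pow_expand c n
    refine ⟨D + E, ?_⟩
    rw [Finset.sum_range_succ, hD, hE, Finset.sum_range_succ]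
    push_cast
    ring

private lemma bin_sum_id_dvd {p : ℕ} (hp : p.Prime) (hodd : p ≠ 2) :
    (p : ℤ) ∣ ∑ i ∈ range p, (i : ℤ) := by
  have h2 : (∑ i ∈ range p, i) * 2 = p * (p - 1) := Finset.sum_range_id_mul_two p
  have : p ∣ (∑ i ∈ range p, i) * 2 := ⟨p - 1, h2⟩
  rcases (Nat.Prime.dvd_mul hp).mp this with h | h
  · have := Int.natCast_dvd_natCast.mpr h
    simpa using this
  · exact absurd ((Nat.prime_dvd_prime_iff_eq hp Nat.prime_two).mp h) hodd

private lemma bin_arith {q e p a : ℕ} (hq : 2 ≤ q) (he : e ∣ q - 1) (hp : p.Prime)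
    (hpe : p ∣ e)
    (hgcd : Nat.gcd ((q - 1) / e) (p * a) = 1)
    (hall : ∀ r : ℕ, r.Prime → r ∣ p * a → r ∣ e)
    (h4 : 4 ∣ p * a → 4 ∣ q - 1) :
    Nat.gcd ((q ^ p - 1) / (p * e)) a = 1 := by
  by_contra hne
  obtain ⟨r, hr, hrd⟩ := Nat.exists_prime_and_dvd hne
  have hr1 : r ∣ (q ^ p - 1) / (p * e) := hrd.trans (Nat.gcd_dvd_left _ _)
  have hr2 : r ∣ a := hrd.trans (Nat.gcd_dvd_right _ _)
  set c := q - 1 with hc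
  have hc1 : 1 ≤ c := by omega
  have he0 : 0 < e := Nat.pos_of_dvd_of_pos he (by omega)
  set S := ∑ i ∈ Finset.range p, q ^ i with hS
  have hcZ : (c : ℤ) = (q : ℤ) - 1 := by rw [hc]; push_cast [Nat.cast_sub (by omega : 1 ≤ q)]; ring
  have hqZ : (q : ℤ) = 1 + (c : ℤ) := by rw [hcZ]; ring
  have hSZ : (S : ℤ) = ∑ i ∈ Finset.range p, (1 + (c : ℤ)) ^ i := by
    rw [hS]; push_cast; rw [← hqZ]
  have hgeomZ : (c : ℤ) * (S : ℤ) = (q : ℤ) ^ p - 1 := by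
    have hg := geom_sum_mul (q : ℤ) p
    rw [hS]; push_cast
    rw [← hg, hcZ]; ring
  have hq1 : 1 ≤ q ^ p := Nat.one_le_pow _ _ (by omega)
  have hgeomN : c * S = q ^ p - 1 := by
    have : ((c * S : ℕ) : ℤ) = ((q ^ p - 1 : ℕ) : ℤ) := by
      push_cast [Nat.cast_sub hq1]
      exact hgeomZ
    exact_mod_cast this
  obtain ⟨D, hD⟩ := bin_geom_expand (c : ℤ) p
  have hcS : (c : ℤ) ∣ (S : ℤ) - p := by
    rw [hSZ, hD]
    exact ⟨(∑ i ∈ Finset.range p, (i : ℤ)) + c * D, by push_cast; ring⟩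
  have hpc : p ∣ c := hpe.trans he
  have hpSZ : (p : ℤ) ∣ (S : ℤ) := by
    have h1 : (p : ℤ) ∣ (S : ℤ) - p := (Int.natCast_dvd_natCast.mpr hpc).trans hcS
    have := dvd_add h1 (dvd_refl (p : ℤ))
    simpa using this
  have hpS : p ∣ S := by exact_mod_cast hpSZ
  have hquot : (q ^ p - 1) / (p * e) = (c / e) * (S / p) := by
    have hkey : (p * e) * ((c / e) * (S / p)) = q ^ p - 1 := by
      rw [← hgeomN]
      have h1 := Nat.mul_div_cancel' he
      have h2 := Nat.mul_div_cancel' hpS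
      calc (p * e) * ((c / e) * (S / p)) = (e * (c / e)) * (p * (S / p)) := by ring
        _ = c * S := by rw [h1, h2]
    rw [← hkey, Nat.mul_div_cancel_left _ (Nat.mul_pos hp.pos he0)]
  rw [hquot] at hr1
  rcases (Nat.Prime.dvd_mul hr).mp hr1 with hrc | hrs
  · have hrg : r ∣ Nat.gcd ((q - 1) / e) (p * a) :=
      Nat.dvd_gcd hrc (hr2.mul_left p)
    rw [hgcd] at hrg
    exact hr.ne_one (Nat.dvd_one.mp hrg)
  · have hrS : r ∣ S := hrs.trans (Nat.div_dvd_of_dvd hpS)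
    by_cases hrp : r = p
    · subst hrp
      have hr2S : r * r ∣ S := by
        obtain ⟨k, hk⟩ := hrs
        have hSr : S = r * (S / r) := (Nat.mul_div_cancel' hpS).symm
        exact ⟨k, by rw [hSr, hk]; ring⟩
      by_cases hr2' : r = 2
      · subst hr2'
        have h4c : 4 ∣ c := h4 ((by norm_num : (4:ℕ) = 2 * 2) ▸ Nat.mul_dvd_mul_left 2 hr2)
        have hS2 : S = 1 + q := by
          simp [hS, Finset.sum_range_succ]
        have h4S : (4 : ℕ) ∣ 1 + q := by
          rw [← hS2]
          exact (by norm_num : (4:ℕ) = 2 * 2) ▸ hr2S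
        omega
      · have hT := bin_sum_id_dvd hp hr2'
        have hcd : (r : ℤ) ∣ (c : ℤ) := Int.natCast_dvd_natCast.mpr hpc
        have hrrZ : ((r : ℤ) * r) ∣ (S : ℤ) - r := by
          rw [hSZ, hD]
          have h1 : ((r : ℤ) * r) ∣ (c : ℤ) * (∑ i ∈ Finset.range r, (i : ℤ)) :=
            mul_dvd_mul hcd hT
          have h2 : ((r : ℤ) * r) ∣ (c : ℤ) ^ 2 * D := by
            refine Dvd.dvd.mul_right ?_ D
            rw [pow_two]
            exact mul_dvd_mul hcd hcd
          have heq : ((r : ℤ) + (c : ℤ) * (∑ i ∈ Finset.range r, (i : ℤ)) + (c : ℤ) ^ 2 * D)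
              - (r : ℤ) = (c : ℤ) * (∑ i ∈ Finset.range r, (i : ℤ)) + (c : ℤ) ^ 2 * D := by ring
          push_cast
          push_cast at heq
          rw [heq]
          exact dvd_add h1 h2
        have hrrS : ((r : ℤ) * r) ∣ (S : ℤ) := by exact_mod_cast hr2S
        have hrrr : ((r : ℤ) * r) ∣ (r : ℤ) := by
          have := dvd_sub hrrS hrrZ
          simpa using this
        have hrr : r * r ∣ r := by exact_mod_cast hrrr
        have := Nat.le_of_dvd hp.pos hrr
        nlinarith [hp.two_le]
    · have hre : r ∣ e := hall r hr (hr2.mul_left p)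
      have hrSp : (r : ℤ) ∣ (S : ℤ) - p := (Int.natCast_dvd_natCast.mpr (hre.trans he)).trans hcS
      have hrpZ : (r : ℤ) ∣ (p : ℤ) := by
        have := dvd_sub (Int.natCast_dvd_natCast.mpr hrS) hrSp
        simpa using this
      exact hrp ((Nat.prime_dvd_prime_iff_eq hr hp).mp (by exact_mod_cast hrpZ))


section Helpers

variable {F : Type*} [Field F] [Fintype F]

private lemma bin_order_dvd {g : F} (hg : g ≠ 0) : orderOf g ∣ Fintype.card F - 1 :=
  orderOf_dvd_of_pow_eq_one (FiniteField.pow_card_sub_one_eq_one g hg)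

private lemma bin_order_pos {g : F} (hg : g ≠ 0) : 0 < orderOf g :=
  Nat.pos_of_dvd_of_pos (bin_order_dvd hg) (by have := Fintype.one_lt_card (α := F); omega)

/-- If `p` is prime, `p ∣ orderOf g` and `p ∤ (q-1)/orderOf g`, then `g` is not a `p`-th power. -/
private lemma bin_not_pow {g : F} (hg : g ≠ 0) {p : ℕ} (hp : p.Prime)
    (hpe : p ∣ orderOf g) (hpq : ¬ p ∣ ((Fintype.card F - 1) / orderOf g)) :
    ∀ b : F, b ^ p ≠ g := by
  intro b hb
  have hb0 : b ≠ 0 := by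
    rintro rfl
    exact hg (by rw [← hb, zero_pow hp.ne_zero])
  have ht : orderOf b ∣ Fintype.card F - 1 := bin_order_dvd hb0
  have hord : orderOf g = orderOf b / Nat.gcd (orderOf b) p := by
    rw [← hb, orderOf_pow' b hp.ne_zero]
  by_cases hpt : p ∣ orderOf b
  · have hgcd : Nat.gcd (orderOf b) p = p := Nat.gcd_eq_right hpt
    rw [hgcd] at hord
    have hmul : p * orderOf g = orderOf b := by rw [hord, Nat.mul_div_cancel' hpt]
    apply hpq
    rw [Nat.dvd_div_iff_mul_dvd (bin_order_dvd hg), mul_comm]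
    exact hmul ▸ ht
  · rw [(hp.coprime_iff_not_dvd.mpr hpt).symm.gcd_eq_one, Nat.div_one] at hord
    exact hpt (hord ▸ hpe)

private lemma bin_exists_pow_of_not_dvd {g : F} (hg : g ≠ 0) {p : ℕ} (hp : p.Prime)
    (h : ¬ p ∣ orderOf g) : ∃ b : F, b ^ p = g := by
  rcases Nat.lt_or_ge (orderOf g) 2 with h1 | h1
  · have he1 : orderOf g = 1 := by have := bin_order_pos hg; omega
    exact ⟨1, by simp [orderOf_eq_one_iff.mp he1]⟩
  · have hco : Nat.Coprime p (orderOf g) := hp.coprime_iff_not_dvd.mpr h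
    obtain ⟨m, -, hm⟩ := Nat.exists_mul_mod_eq_one_of_coprime hco h1
    refine ⟨g ^ m, ?_⟩
    rw [← pow_mul, ← pow_mod_orderOf, mul_comm m p, hm, pow_one]

private lemma bin_exists_pow_of_dvd_div {g : F} (hg : g ≠ 0) {p : ℕ}
    (h : p ∣ ((Fintype.card F - 1) / orderOf g)) : ∃ b : F, b ^ p = g := by
  classical
  obtain ⟨h0, hgen⟩ := IsCyclic.exists_generator (α := Fˣ)
  have hu : IsUnit g := hg.isUnit
  obtain ⟨u, hu'⟩ := hu
  obtain ⟨k, hk⟩ : u ∈ Submonoid.powers h0 := by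
    rw [mem_powers_iff_mem_zpowers]; exact hgen u
  dsimp only at hk
  have hN : orderOf h0 = Fintype.card F - 1 := by
    rw [orderOf_eq_card_of_forall_mem_zpowers hgen, Nat.card_eq_fintype_card (α := Fˣ),
      Fintype.card_units]
  set N := Fintype.card F - 1 with hNdef
  have hN0 : 0 < N := by have := Fintype.one_lt_card (α := F); omega
  have hordu : orderOf u = N / Nat.gcd N k := by
    rw [← hk, orderOf_pow, hN]
  have hg_ord : orderOf g = orderOf u := by rw [← hu', orderOf_units]
  have hdN : Nat.gcd N k ∣ N := Nat.gcd_dvd_left N k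
  have hd : N / orderOf g = Nat.gcd N k := by
    rw [hg_ord, hordu, Nat.div_div_self hdN (by omega)]
  have hpk : p ∣ k := (hd ▸ h).trans (Nat.gcd_dvd_right N k)
  refine ⟨((h0 ^ (k / p) : Fˣ) : F), ?_⟩
  rw [← Units.val_pow_eq_pow_val, ← pow_mul, Nat.div_mul_cancel hpk, hk, hu']


private lemma bin_nonsquare_mul {a b : F} (ha0 : a ≠ 0) (hb0 : b ≠ 0)
    (ha : ¬ IsSquare a) (hb : ¬ IsSquare b) : IsSquare (a * b) := by
  classical
  have hχa : quadraticChar F a = -1 := quadraticChar_neg_one_iff_not_isSquare.mpr ha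
  have hχb : quadraticChar F b = -1 := quadraticChar_neg_one_iff_not_isSquare.mpr hb
  have hmul : quadraticChar F (a * b) = 1 := by rw [map_mul, hχa, hχb]; ring
  exact (quadraticChar_one_iff_isSquare (mul_ne_zero ha0 hb0)).mp hmul

private lemma bin_not_irred_of_four {g : F} (hg : g ≠ 0) {n : ℕ} (hn : n ≠ 0) (h4 : 4 ∣ n)
    (hq4 : Fintype.card F % 4 = 3) (hns : ¬ IsSquare g) :
    ¬ Irreducible ((X : F[X]) ^ n - C g) := by
  classical
  have hchar : ringChar F ≠ 2 := by
    intro h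
    have := FiniteField.even_card_iff_char_two.mp h
    omega
  have h2 : (2 : F) ≠ 0 := Ring.two_ne_zero hchar
  have hnsm1 : ¬ IsSquare (-1 : F) := by
    simp [FiniteField.isSquare_neg_one_iff, hq4]
  have hsq : IsSquare (-g) := by
    have := bin_nonsquare_mul (neg_ne_zero.mpr (one_ne_zero (α := F))) hg hnsm1 hns
    simpa using this
  obtain ⟨c, hc⟩ := hsq
  have hc0 : c ≠ 0 := by
    rintro rfl
    exact hg (neg_eq_zero.mp (by simpa using hc))
  have key : ∃ b : F, g = -(4 * b ^ 4) := by
    have hgc : g = -(c * c) := by rw [← hc, neg_neg]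
    by_cases hz : IsSquare (c / 2)
    · obtain ⟨b, hb⟩ := hz
      refine ⟨b, ?_⟩
      have hcb : c = 2 * (b * b) := by
        field_simp at hb
        linear_combination hb
      rw [hgc, hcb]; ring
    · have hz0 : c / 2 ≠ 0 := div_ne_zero hc0 h2
      have hsq2 := bin_nonsquare_mul (neg_ne_zero.mpr (one_ne_zero (α := F))) hz0 hnsm1 hz
      obtain ⟨b, hb⟩ : IsSquare (-(c / 2)) := by simpa using hsq2
      refine ⟨b, ?_⟩
      have hcb : c = -(2 * (b * b)) := by
        field_simp at hb
        linear_combination -hb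
      rw [hgc, hcb]; ring
  obtain ⟨b, hb⟩ := key
  obtain ⟨m, rfl⟩ := h4
  have hm : m ≠ 0 := by rintro rfl; simp at hn
  intro hirr
  have hfact : (X : F[X]) ^ (4 * m) - C g =
      (X ^ (2*m) + C (2*b) * X ^ m + C (2*b^2)) * (X ^ (2*m) - C (2*b) * X ^ m + C (2*b^2)) := by
    rw [hb]
    simp only [map_neg, map_mul, map_ofNat, map_pow, sub_neg_eq_add]
    ring
  rcases hirr.isUnit_or_isUnit hfact with hA | hB
  · have h0 := natDegree_eq_zero_of_isUnit hA
    have hdeg : (X ^ (2*m) + C (2*b) * X ^ m + C (2*b^2) : F[X]).natDegree = 2*m := by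
      compute_degree!
      · simp [show ¬(2 * m = m) from by omega, hm]
      · omega
      · omega
    omega
  · have h0 := natDegree_eq_zero_of_isUnit hB
    have hdeg : (X ^ (2*m) - C (2*b) * X ^ m + C (2*b^2) : F[X]).natDegree = 2*m := by
      compute_degree!
      · simp [show ¬(2 * m = m) from by omega, hm]
      · omega
      · omega
    omega

end Helpers


universe u

private lemma bin_order_dvd' {F : Type*} [Field F] [Fintype F] {g : F} (hg : g ≠ 0) :
    orderOf g ∣ Fintype.card F - 1 :=
  orderOf_dvd_of_pow_eq_one (FiniteField.pow_card_sub_one_eq_one g hg)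

private lemma bin_suff :
    ∀ (n : ℕ) (F : Type u) [Field F] [Finite F] (g : F), g ≠ 0 →
    Nat.gcd ((Nat.card F - 1) / orderOf g) n = 1 →
    (∀ p : ℕ, p.Prime → p ∣ n → p ∣ orderOf g) →
    (4 ∣ n → 4 ∣ Nat.card F - 1) →
    Irreducible ((X : F[X]) ^ n - C g) := by
  refine induction_on_primes ?_ ?_ ?_
  · intro F _ _ g hg h1 h2 h3
    exfalso
    letI : Fintype F := Fintype.ofFinite F
    have he0 : 0 < orderOf g :=
      Nat.pos_of_dvd_of_pos (bin_order_dvd' hg)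
        (by have := Fintype.one_lt_card (α := F); omega)
    obtain ⟨p, hple, hp⟩ := Nat.exists_infinite_primes (orderOf g + 1)
    have := Nat.le_of_dvd he0 (h2 p hp (dvd_zero p))
    omega
  · intro F _ _ g hg _ _ _
    simpa using irreducible_X_sub_C g
  · rintro p a hp IH F fieldF finiteF g hg h1 h2 h3
    letI : Fintype F := Fintype.ofFinite F
    set q := Nat.card F with hqdef
    have hcard : q = Fintype.card F := Nat.card_eq_fintype_card
    have hq2 : 2 ≤ q := by rw [hcard]; exact Fintype.one_lt_card
    have he : orderOf g ∣ q - 1 := by rw [hcard]; exact bin_order_dvd' hg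
    have he0 : 0 < orderOf g := Nat.pos_of_dvd_of_pos he (by omega)
    have hpe : p ∣ orderOf g := h2 p hp (dvd_mul_right p a)
    have hpq : ¬ p ∣ ((q - 1) / orderOf g) := by
      intro hd
      have hply : p ∣ Nat.gcd ((q - 1) / orderOf g) (p * a) := Nat.dvd_gcd hd (dvd_mul_right p a)
      rw [h1] at hply
      exact hp.ne_one (Nat.dvd_one.mp hply)
    have hnotpow : ∀ b : F, b ^ p ≠ g :=
      bin_not_pow hg hp hpe (by rwa [← hcard])
    rw [mul_comm p a]
    apply X_pow_mul_sub_C_irreducible (X_pow_sub_C_irreducible_of_prime hp hnotpow)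
    intro E _ _ x hx
    have hxi : IsIntegral F x := by
      refine not_not.mp fun h => ?_
      simpa only [degree_zero, degree_X_pow_sub_C hp.pos, WithBot.natCast_ne_bot] using
        congr_arg degree (hx.symm.trans (dif_neg h))
    letI : FiniteDimensional F F⟮x⟯ := IntermediateField.adjoin.finiteDimensional hxi
    haveI : Finite F⟮x⟯ := Module.finite_of_finite F
    set y := IntermediateField.AdjoinSimple.gen F x with hy
    have hinj := (algebraMap F⟮x⟯ E).injective
    have hxp : x ^ p = algebraMap F E g := by
      have h0 := minpoly.aeval F x
      rw [hx] at h0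
      simp only [map_sub, aeval_X_pow, aeval_C, sub_eq_zero] at h0
      exact h0
    have hyp : y ^ p = algebraMap F F⟮x⟯ g := by
      apply hinj
      rw [map_pow, IntermediateField.AdjoinSimple.algebraMap_gen, ← IsScalarTower.algebraMap_apply]
      exact hxp
    have hordg' : orderOf (algebraMap F F⟮x⟯ g) = orderOf g :=
      orderOf_injective (algebraMap F F⟮x⟯).toMonoidHom (algebraMap F F⟮x⟯).injective g
    have hy0 : y ≠ 0 := by
      intro h0
      apply hg
      have hz : algebraMap F F⟮x⟯ g = 0 := by rw [← hyp, h0, zero_pow hp.ne_zero]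
      exact ((_root_.map_eq_zero (algebraMap F F⟮x⟯)).mp hz)
    have hype : y ^ (p * orderOf g) = 1 := by
      rw [pow_mul, hyp, ← hordg', pow_orderOf_eq_one]
    have hordy : orderOf y = p * orderOf g := by
      have hsub : orderOf g = orderOf y / Nat.gcd (orderOf y) p := by
        rw [← hordg', ← hyp, orderOf_pow' y hp.ne_zero]
      by_cases hpt : p ∣ orderOf y
      · rw [Nat.gcd_eq_right hpt] at hsub
        rw [hsub, Nat.mul_div_cancel' hpt]
      · rw [(hp.coprime_iff_not_dvd.mpr hpt).symm.gcd_eq_one, Nat.div_one] at hsub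
        exact absurd (hsub ▸ hpe) hpt
    have hfr : Module.finrank F F⟮x⟯ = p := by
      rw [IntermediateField.adjoin.finrank hxi, hx, natDegree_X_pow_sub_C]
    have hcardL : Nat.card F⟮x⟯ = q ^ p := by
      letI : Fintype F⟮x⟯ := Fintype.ofFinite _
      rw [Nat.card_eq_fintype_card, Module.card_eq_pow_finrank (K := F) (V := F⟮x⟯), hfr, hcard]
    apply IH F⟮x⟯ y hy0
    · rw [hcardL, hordy]
      exact bin_arith hq2 he hp hpe h1 h2 h3
    · intro r hr hra
      rw [hordy]
      exact (h2 r hr (hra.mul_left p)).mul_left p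
    · intro h4a
      rw [hcardL]
      exact dvd_trans (h3 (h4a.mul_left p)) (by simpa using Nat.sub_dvd_pow_sub_pow q 1 p)

/-- Lidl–Niederreiter, Theorem 3.75: for a finite field `F` with `q` elements,
`g ∈ F` nonzero of multiplicative order `e`, and `n ≥ 2`, the binomial
`x^n - g` is irreducible over `F` iff `gcd((q-1)/e, n) = 1`, every prime
divisor of `n` divides `e`, and `4 ∣ n → 4 ∣ q - 1`. -/
theorem binomial_irreducible_iff_finite_field {F : Type*} [Field F] [Fintype F]
    (q : ℕ) (hq : Fintype.card F = q) (g : F) (hg : g ≠ 0)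
    (n : ℕ) (hn : 2 ≤ n) (e : ℕ) (he : e = orderOf g) :
    Irreducible ((X : F[X]) ^ n - C g) ↔
      Nat.gcd ((q - 1) / e) n = 1 ∧
        (∀ p : ℕ, p.Prime → p ∣ n → p ∣ e) ∧
          (4 ∣ n → 4 ∣ q - 1) := by
  subst hq he
  constructor
  · intro hirr
    have hq2 : 2 ≤ Fintype.card F := Fintype.one_lt_card
    have h2 : ∀ p : ℕ, p.Prime → p ∣ n → p ∣ orderOf g := by
      intro p hp hpn
      by_contra hne
      obtain ⟨b, hb⟩ := bin_exists_pow_of_not_dvd hg hp hne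
      exact pow_ne_of_irreducible_X_pow_sub_C hirr hpn hp.ne_one b hb
    have h1 : Nat.gcd ((Fintype.card F - 1) / orderOf g) n = 1 := by
      by_contra hne
      obtain ⟨r, hr, hrd⟩ := Nat.exists_prime_and_dvd hne
      obtain ⟨b, hb⟩ := bin_exists_pow_of_dvd_div hg (hrd.trans (Nat.gcd_dvd_left _ _))
      exact pow_ne_of_irreducible_X_pow_sub_C hirr (hrd.trans (Nat.gcd_dvd_right _ _))
        hr.ne_one b hb
    refine ⟨h1, h2, ?_⟩
    intro h4n
    by_contra h4q
    have h2e : 2 ∣ orderOf g := h2 2 Nat.prime_two (dvd_trans ⟨2, rfl⟩ h4n)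
    have h2q : 2 ∣ Fintype.card F - 1 := h2e.trans (bin_order_dvd hg)
    have hq4 : Fintype.card F % 4 = 3 := by omega
    have hns : ¬ IsSquare g := by
      rintro ⟨b, rfl⟩
      exact pow_ne_of_irreducible_X_pow_sub_C hirr (dvd_trans ⟨2, rfl⟩ h4n)
        (by norm_num) b (sq b)
    exact bin_not_irred_of_four hg (by omega) h4n hq4 hns hirr
  · rintro ⟨h1, h2, h3⟩
    haveI : Finite F := Finite.of_fintype F
    have hc : Nat.card F = Fintype.card F := Nat.card_eq_fintype_card
    exact bin_suff n F g hg (by rwa [hc]) h2 (by rwa [hc])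
end

section
/- Let F be a finite field with q elements, let g be a generator of the cyclic group F^×, and let n ≥ 2 be a natural number. Then x^n − g is irreducible over F if and only if every prime divisor of n divides q − 1 and, in case 4 divides n, also 4 divides q − 1. -/
open Polynomial IntermediateField

section Aux

/-- If `u ^ p = v` with `p` prime dividing `orderOf v`, then `orderOf u = p * orderOf v`. -/
lemma aux_orderOf_eq_of_pow_prime {G : Type*} [Group G] [Finite G] {u v : G} {p : ℕ}
    (hp : p.Prime) (h : u ^ p = v) (hpv : p ∣ orderOf v) : orderOf u = p * orderOf v := by
  have h1 : orderOf v = orderOf u / (orderOf u).gcd p := by rw [← h, orderOf_pow]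
  by_cases hpd : p ∣ orderOf u
  · have hg : (orderOf u).gcd p = p := Nat.gcd_eq_right hpd
    rw [h1, hg, Nat.mul_div_cancel' hpd]
  · have hg : (orderOf u).gcd p = 1 :=
      Nat.Coprime.gcd_eq_one (((hp.coprime_iff_not_dvd).mpr hpd).symm)
    rw [h1, hg, Nat.div_one] at hpv ⊢
    exact absurd hpv hpd

lemma aux_prime_dvd_orderOf {F : Type*} [Field F] [Fintype F] (x : Fˣ) {r : ℕ} (hr : r.Prime)
    (hvr : (orderOf x).factorization r = (Fintype.card F - 1).factorization r)
    (hrq : r ∣ Fintype.card F - 1) : r ∣ orderOf x := by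
  have hq0 : Fintype.card F - 1 ≠ 0 := by
    have := Fintype.one_lt_card (α := F); omega
  have hx0 : orderOf x ≠ 0 := (orderOf_pos x).ne'
  have h1 : 0 < (Fintype.card F - 1).factorization r := hr.factorization_pos_of_dvd hq0 hrq
  have : r ^ 1 ∣ orderOf x := (hr.pow_dvd_iff_le_factorization hx0).mpr (by omega)
  simpa using this

lemma aux_no_pth_root {F : Type*} [Field F] [Fintype F] (x : Fˣ) {p : ℕ} (hp : p.Prime)
    (hvp : (orderOf x).factorization p = (Fintype.card F - 1).factorization p)
    (hpq : p ∣ Fintype.card F - 1) :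
    ∀ y : Fˣ, y ^ p ≠ x := by
  classical
  intro y hy
  have hq0 : Fintype.card F - 1 ≠ 0 := by
    have := Fintype.one_lt_card (α := F); omega
  have hx0 : orderOf x ≠ 0 := (orderOf_pos x).ne'
  have hpe : p ∣ orderOf x := aux_prime_dvd_orderOf x hp hvp hpq
  have horder : orderOf y = p * orderOf x := aux_orderOf_eq_of_pow_prime hp hy hpe
  have hdvd : orderOf y ∣ Fintype.card F - 1 := by
    have := orderOf_dvd_card (x := y)
    rwa [Fintype.card_units] at this
  have hy0 : orderOf y ≠ 0 := (orderOf_pos y).ne'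
  have hle : (orderOf y).factorization p ≤ (Fintype.card F - 1).factorization p :=
    Finsupp.le_def.mp ((Nat.factorization_le_iff_dvd hy0 hq0).mpr hdvd) p
  rw [horder, Nat.factorization_mul hp.ne_zero hx0] at hle
  simp only [Finsupp.coe_add, Pi.add_apply, hp.factorization_self] at hle
  omega

universe u

/-- Main induction: over a finite field `F`, if for every prime `r ∣ n` the `r`-adic valuation
of `orderOf x` agrees with (and is positive in) that of `|F| - 1`, and `4 ∣ n → 4 ∣ |F| - 1`,
then `X ^ n - C x` is irreducible. -/
theorem aux_irreducible (n : ℕ) : ∀ (F : Type u) [Field F] [Fintype F] (x : Fˣ),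
    (∀ r : ℕ, r.Prime → r ∣ n →
      r ∣ Fintype.card F - 1 ∧
        (orderOf x).factorization r = (Fintype.card F - 1).factorization r) →
    (4 ∣ n → 4 ∣ Fintype.card F - 1) →
    Irreducible ((X : F[X]) ^ n - C (x : F)) := by
  induction n using induction_on_primes with
  | zero =>
    intro F _ _ x hcond _
    exfalso
    obtain ⟨r, hle, hr⟩ := Nat.exists_infinite_primes (orderOf x + 1)
    obtain ⟨hrq, hvr⟩ := hcond r hr (dvd_zero r)
    have hrx : r ∣ orderOf x := aux_prime_dvd_orderOf x hr hvr hrq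
    have := Nat.le_of_dvd (orderOf_pos x) hrx
    omega
  | one =>
    intro F _ _ x _ _
    simpa using irreducible_X_sub_C (x : F)
  | prime_mul p m hp IH =>
    intro F _ _ x hcond h4
    classical
    have hq2 : 1 < Fintype.card F := Fintype.one_lt_card
    set q := Fintype.card F with hqdef
    obtain ⟨hpq, hvp⟩ := hcond p hp (dvd_mul_right p m)
    have hnr := aux_no_pth_root x hp hvp hpq
    have hx0 : orderOf x ≠ 0 := (orderOf_pos x).ne'
    have hm : Irreducible ((X : F[X]) ^ p - C (x : F)) := by
      apply X_pow_sub_C_irreducible_of_prime hp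
      intro b hb
      have hb0 : b ≠ 0 := by
        rintro rfl
        rw [zero_pow hp.ne_zero] at hb
        exact x.ne_zero hb.symm
      exact hnr (Units.mk0 b hb0) (Units.ext (by simpa using hb))
    rw [mul_comm]
    apply X_pow_mul_sub_C_irreducible hm
    intro E _ _ z hz
    have hne : (X : F[X]) ^ p - C (x : F) ≠ 0 := X_pow_sub_C_ne_zero hp.pos _
    have hint : IsIntegral F z := by
      by_contra hni
      exact hne (hz.symm.trans (minpoly.eq_zero hni))
    haveI : FiniteDimensional F F⟮z⟯ := IntermediateField.adjoin.finiteDimensional hint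
    haveI : Finite F⟮z⟯ := Module.finite_of_finite F
    haveI : Fintype F⟮z⟯ := Fintype.ofFinite _
    have hcard : Fintype.card F⟮z⟯ = q ^ p := by
      rw [Module.card_eq_pow_finrank (K := F) (V := F⟮z⟯),
        IntermediateField.adjoin.finrank hint, hz, natDegree_X_pow_sub_C]
    set g0 := IntermediateField.AdjoinSimple.gen F z with hg0def
    have hgen : g0 ^ p = algebraMap F F⟮z⟯ x := by
      have h0 := minpoly.aeval F g0
      rw [hg0def, IntermediateField.minpoly_gen, hz, map_sub, map_pow, aeval_X, aeval_C] at h0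
      exact sub_eq_zero.mp h0
    have hg00 : g0 ≠ 0 := by
      intro h
      rw [h, zero_pow hp.ne_zero] at hgen
      exact x.ne_zero ((map_eq_zero_iff _ (algebraMap F F⟮z⟯).injective).mp hgen.symm)
    set u : F⟮z⟯ˣ := Units.mk0 g0 hg00 with hudef
    set φ : Fˣ →* F⟮z⟯ˣ := Units.map (algebraMap F F⟮z⟯ : F →* F⟮z⟯) with hφdef
    have hφinj : Function.Injective φ :=
      Units.map_injective (f := (algebraMap F F⟮z⟯ : F →* F⟮z⟯))
        (algebraMap F F⟮z⟯).injective
    have hup : u ^ p = φ x := by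
      apply Units.ext
      simpa [hudef, hφdef] using hgen
    have hordφ : orderOf (φ x) = orderOf x := orderOf_injective φ hφinj x
    have hpe : p ∣ orderOf x := aux_prime_dvd_orderOf x hp hvp hpq
    have hordu : orderOf u = p * orderOf x := by
      have := aux_orderOf_eq_of_pow_prime hp hup (by rw [hordφ]; exact hpe)
      rwa [hordφ] at this
    have hq1pos : 0 < q - 1 := by omega
    have hdvdqp : q - 1 ∣ q ^ p - 1 := by
      simpa using Nat.sub_dvd_pow_sub_pow q 1 p
    have hqppos : 1 < q ^ p := Nat.one_lt_pow hp.ne_zero hq2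
    -- the key valuation computation
    have key : ∀ r : ℕ, r.Prime → r ∣ m →
        padicValNat r (q ^ p - 1) = padicValNat r (q - 1) + padicValNat r p := by
      intro r hr hrm
      have hrn : r ∣ p * m := Dvd.dvd.mul_left hrm p
      obtain ⟨hrq, hvr⟩ := hcond r hr hrn
      by_cases hr2 : r = 2
      · subst hr2
        have hqodd : q % 2 = 1 := by omega
        by_cases hp2 : p = 2
        · subst hp2
          have h4q : 4 ∣ q - 1 := by
            apply h4
            obtain ⟨k, rfl⟩ := hrm
            exact ⟨k, by ring⟩
          obtain ⟨b, hb⟩ := h4q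
          have hq1 : q + 1 = 2 * (2 * b + 1) := by omega
          have hself : padicValNat 2 2 = 1 := padicValNat.self (by norm_num)
          have hbodd : padicValNat 2 (2 * b + 1) = 0 :=
            padicValNat.eq_zero_of_not_dvd (by omega)
          have hv2 : padicValNat 2 (q + 1) = 1 := by
            rw [hq1, padicValNat.mul (a := 2) (b := 2 * b + 1) (by norm_num) (by omega),
              hself, hbodd]
          have hqsq : q ^ 2 - 1 = (q + 1) * (q - 1) := by
            simpa using sq_tsub_sq q 1
          rw [hqsq, padicValNat.mul (a := q + 1) (b := q - 1) (by omega) (by omega), hv2,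
            hself]
          omega
        · -- p odd, r = 2
          have hpodd : Odd p := hp.odd_of_ne_two hp2
          have hS : (q - 1) * (∑ i ∈ Finset.range p, q ^ i) = q ^ p - 1 := by
            have hgs := geom_sum_mul (q : ℤ) p
            have h1q : (1 : ℤ) ≤ (q : ℤ) := by exact_mod_cast hq2.le
            zify [hq2.le, hqppos.le]
            linarith [hgs]
          have hSodd : ¬ 2 ∣ (∑ i ∈ Finset.range p, q ^ i) := by
            have hmod : (∑ i ∈ Finset.range p, q ^ i) % 2 = 1 := by
              rw [Finset.sum_nat_mod]
              have hterm : ∀ i ∈ Finset.range p, q ^ i % 2 = 1 := by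
                intro i _
                exact Nat.odd_iff.mp (Odd.pow (Nat.odd_iff.mpr hqodd))
              rw [Finset.sum_congr rfl hterm, Finset.sum_const, Finset.card_range,
                smul_eq_mul, mul_one]
              have := Nat.odd_iff.mp hpodd
              omega
            omega
          have hps : padicValNat 2 p = 0 :=
            padicValNat.eq_zero_of_not_dvd (by have := Nat.odd_iff.mp hpodd; omega)
          have hss : padicValNat 2 (∑ i ∈ Finset.range p, q ^ i) = 0 :=
            padicValNat.eq_zero_of_not_dvd hSodd
          have hSne : (∑ i ∈ Finset.range p, q ^ i) ≠ 0 := by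
            intro h
            rw [h] at hSodd
            exact hSodd (dvd_zero 2)
          rw [← hS, padicValNat.mul (a := q - 1) (b := ∑ i ∈ Finset.range p, q ^ i)
            (by omega) hSne, hss, hps]
      · haveI : Fact r.Prime := ⟨hr⟩
        have hrodd : Odd r := hr.odd_of_ne_two hr2
        have hrnq : ¬ r ∣ q := by
          intro hrdq
          have : r ∣ q - (q - 1) := Nat.dvd_sub hrdq hrq
          rw [show q - (q - 1) = 1 by omega] at this
          exact hr.one_lt.ne' (Nat.dvd_one.mp this)
        have := padicValNat.pow_sub_pow (p := r) (x := q) (y := 1) hrodd (by omega)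
          (by simpa using hrq) hrnq (n := p) hp.ne_zero
        simpa using this
    apply IH F⟮z⟯ u
    · intro r hr hrm
      have hrn : r ∣ p * m := Dvd.dvd.mul_left hrm p
      obtain ⟨hrq, hvr⟩ := hcond r hr hrn
      rw [hcard]
      constructor
      · exact hrq.trans hdvdqp
      · rw [hordu, Nat.factorization_mul hp.ne_zero hx0]
        simp only [Finsupp.coe_add, Pi.add_apply]
        rw [Nat.factorization_def _ hr, Nat.factorization_def _ hr,
          Nat.factorization_def _ hr] at *
        rw [hvr, key r hr hrm]
        omega
    · intro h4m
      rw [hcard]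
      exact (h4 (Dvd.dvd.mul_left h4m p)).trans hdvdqp

end Aux

/-- For a finite field `F` with `q` elements, a generator `g` of the cyclic
group `Fˣ`, and `n ≥ 2`: the binomial `x^n - g` is irreducible over `F` iff
every prime divisor of `n` divides `q - 1`, and `4 ∣ n → 4 ∣ q - 1`. -/
theorem binomial_generator_irreducible_iff {F : Type*} [Field F] [Fintype F]
    (q : ℕ) (hq : Fintype.card F = q) (g : Fˣ)
    (hg : ∀ x : Fˣ, x ∈ Subgroup.zpowers g)
    (n : ℕ) (hn : 2 ≤ n) :
    Irreducible ((X : F[X]) ^ n - C (g : F)) ↔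
      (∀ p : ℕ, p.Prime → p ∣ n → p ∣ q - 1) ∧ (4 ∣ n → 4 ∣ q - 1) := by
  classical
  subst hq
  have hq2 : 1 < Fintype.card F := Fintype.one_lt_card
  set q := Fintype.card F with hqdef
  have hog : orderOf g = q - 1 := by
    have := orderOf_eq_card_of_forall_mem_zpowers hg
    rwa [Nat.card_eq_fintype_card, Fintype.card_units] at this
  -- forward direction, part 1
  have fwd1 : Irreducible ((X : F[X]) ^ n - C (g : F)) → ∀ p : ℕ, p.Prime → p ∣ n → p ∣ q - 1 := by
    intro hirr p hp hpn
    by_contra hnd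
    have hcop : (Nat.card Fˣ).Coprime p := by
      rw [Nat.card_eq_fintype_card, Fintype.card_units]
      exact (hp.coprime_iff_not_dvd.mpr hnd).symm
    obtain ⟨y, hy⟩ := (powCoprime hcop).surjective g
    have hy' : y ^ p = g := hy
    exact pow_ne_of_irreducible_X_pow_sub_C hirr hpn hp.ne_one (y : F)
      (by rw [← Units.val_pow_eq_pow_val, hy'])
  constructor
  · intro hirr
    refine ⟨fwd1 hirr, ?_⟩
    intro h4n
    by_contra h4q
    have h2 : 2 ∣ q - 1 := fwd1 hirr 2 Nat.prime_two (dvd_trans ⟨2, rfl⟩ h4n)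
    set m := (q - 1) / 2 with hmdef
    have hm : q - 1 = 2 * m := by omega
    have hmodd : m % 2 = 1 := by omega
    have hmpos : 0 < m := by omega
    have hoddm : Odd m := Nat.odd_iff.mpr hmodd
    -- square root lemma
    have hsq : ∀ v : Fˣ, v ^ m = 1 → ∃ w : Fˣ, w ^ 2 = v := by
      intro v hv
      obtain ⟨k, hk0⟩ := hg v
      have hk : g ^ k = v := hk0
      have hzp : (g ^ k) ^ (m : ℤ) = 1 := by rw [hk, zpow_natCast, hv]
      rw [← zpow_mul] at hzp
      have hdvd : ((q - 1 : ℕ) : ℤ) ∣ k * m := by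
        have := orderOf_dvd_iff_zpow_eq_one.mpr hzp
        rwa [hog] at this
      have hk2 : (2 : ℤ) ∣ k := by
        obtain ⟨c, hc⟩ := hdvd
        have hcast : ((q - 1 : ℕ) : ℤ) = 2 * (m : ℤ) := by exact_mod_cast hm
        rw [hcast] at hc
        have hm0 : (m : ℤ) ≠ 0 := by exact_mod_cast hmpos.ne'
        have : (m : ℤ) * k = (m : ℤ) * (2 * c) := by linarith
        have hkc : k = 2 * c := mul_left_cancel₀ hm0 this
        exact ⟨c, hkc⟩
      obtain ⟨c, rfl⟩ := hk2
      refine ⟨g ^ c, ?_⟩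
      rw [← hk, ← zpow_natCast (g ^ c) 2, ← zpow_mul, mul_comm]
      norm_num
    -- g^m = -1
    have hgm1 : (g ^ m : Fˣ) ≠ 1 := by
      intro h
      have := orderOf_dvd_iff_pow_eq_one.mpr h
      rw [hog] at this
      have := Nat.le_of_dvd hmpos this
      omega
    have hgmsq : ((g : F) ^ m) ^ 2 = 1 := by
      rw [← pow_mul, show m * 2 = q - 1 by omega]
      have : g ^ (q - 1) = 1 := by rw [← hog]; exact pow_orderOf_eq_one g
      calc (g : F) ^ (q - 1) = ((g ^ (q - 1) : Fˣ) : F) := by rw [Units.val_pow_eq_pow_val]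
        _ = 1 := by rw [this, Units.val_one]
    have hgm : (g : F) ^ m = -1 := by
      have h3 : ((g : F) ^ m - 1) * ((g : F) ^ m + 1) = 0 := by linear_combination hgmsq
      rcases mul_eq_zero.mp h3 with h | h
      · exfalso
        apply hgm1
        apply Units.ext
        rw [Units.val_pow_eq_pow_val, Units.val_one]
        linear_combination h
      · linear_combination h
    have hgmu : g ^ m = (-1 : Fˣ) := by
      apply Units.ext
      rw [Units.val_pow_eq_pow_val, hgm, Units.val_neg, Units.val_one]
    have h20 : (2 : F) ≠ 0 := by
      intro h
      apply hgm1
      apply Units.ext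
      rw [Units.val_pow_eq_pow_val, hgm, Units.val_one]
      linear_combination -h
    set two : Fˣ := Units.mk0 (2 : F) h20 with htwodef
    have htwopow : two ^ (q - 1) = 1 := by
      have := pow_card_eq_one (x := two)
      rwa [Fintype.card_units] at this
    set u : Fˣ := (-1 : Fˣ) * g * (two ^ 2)⁻¹ with hudef
    have hu : u ^ m = 1 := by
      have h2m : 2 * m = q - 1 := by omega
      calc u ^ m = ((-1 : Fˣ)) ^ m * g ^ m * ((two ^ 2)⁻¹) ^ m := by
            rw [hudef, mul_pow, mul_pow]
        _ = (-1) * (-1) * (two ^ (q - 1))⁻¹ := by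
            rw [hoddm.neg_one_pow, hgmu, ← inv_pow, ← pow_mul, h2m, inv_pow]
        _ = 1 := by rw [htwopow, inv_one]; simp
    obtain ⟨v, hv⟩ := hsq u hu
    have hv2 : (v ^ m) ^ 2 = 1 := by
      rw [← pow_mul, mul_comm, pow_mul, hv, hu]
    -- v^m = ±1
    have hw4 : ∃ w : Fˣ, w ^ 4 = u := by
      have hvF : ((v : F) ^ m - 1) * ((v : F) ^ m + 1) = 0 := by
        have : ((v ^ m : Fˣ) : F) ^ 2 = 1 := by
          rw [← Units.val_pow_eq_pow_val, hv2, Units.val_one]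
        rw [Units.val_pow_eq_pow_val] at this
        linear_combination this
      rcases mul_eq_zero.mp hvF with h | h
      · have : v ^ m = 1 := by
          apply Units.ext
          rw [Units.val_pow_eq_pow_val, Units.val_one]
          linear_combination h
        obtain ⟨w, hw⟩ := hsq v this
        exact ⟨w, by rw [show (4:ℕ) = 2 * 2 by norm_num, pow_mul, hw, hv]⟩
      · have : (-v) ^ m = 1 := by
          apply Units.ext
          rw [Units.val_pow_eq_pow_val, Units.val_neg, hoddm.neg_pow, Units.val_one]
          linear_combination -h
        obtain ⟨w, hw⟩ := hsq (-v) this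
        refine ⟨w, ?_⟩
        rw [show (4:ℕ) = 2 * 2 by norm_num, pow_mul, hw, ← hv]
        rw [neg_pow, Even.neg_one_pow (by norm_num), one_mul]
    obtain ⟨w, hw⟩ := hw4
    -- g = -(4 * c^4) where c = w
    set c : F := (w : F) with hcdef
    have hgF : (g : F) = -(4 * c ^ 4) := by
      have hgu : g = (-1 : Fˣ) * u * two ^ 2 := by
        rw [hudef]
        group
        simp
      have := congrArg (Units.val) hgu
      rw [Units.val_mul, Units.val_mul, Units.val_neg, Units.val_one, ← hw,
        Units.val_pow_eq_pow_val, Units.val_pow_eq_pow_val] at this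
      rw [this, htwodef]
      simp only [Units.val_mk0]
      ring
    -- Sophie Germain factorization
    obtain ⟨k, rfl⟩ := h4n
    have hk1 : 1 ≤ k := by omega
    have key : (X : F[X]) ^ (4 * k) - C (g : F) =
        (X ^ (2 * k) + C (2 * c ^ 2) - C (2 * c) * X ^ k) *
          (X ^ (2 * k) + C (2 * c ^ 2) + C (2 * c) * X ^ k) := by
      rw [hgF]
      simp only [map_neg, map_mul, map_pow, map_ofNat]
      ring
    rcases hirr.isUnit_or_isUnit key with hunit | hunit
    · have hdeg := Polynomial.natDegree_eq_zero_of_isUnit hunit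
      have hco := Polynomial.coeff_eq_zero_of_natDegree_lt
        (p := X ^ (2 * k) + C (2 * c ^ 2) - C (2 * c) * X ^ k) (n := 2 * k)
        (by rw [hdeg]; omega)
      rw [Polynomial.coeff_sub, Polynomial.coeff_add, Polynomial.coeff_X_pow,
        Polynomial.coeff_C, Polynomial.coeff_C_mul, Polynomial.coeff_X_pow] at hco
      simp only [if_pos rfl, if_neg (show ¬ (2 * k = 0) by omega),
        if_neg (show ¬ (2 * k = k) by omega)] at hco
      simp at hco
    · have hdeg := Polynomial.natDegree_eq_zero_of_isUnit hunit
      have hco := Polynomial.coeff_eq_zero_of_natDegree_lt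
        (p := X ^ (2 * k) + C (2 * c ^ 2) + C (2 * c) * X ^ k) (n := 2 * k)
        (by rw [hdeg]; omega)
      rw [Polynomial.coeff_add, Polynomial.coeff_add, Polynomial.coeff_X_pow,
        Polynomial.coeff_C, Polynomial.coeff_C_mul, Polynomial.coeff_X_pow] at hco
      simp only [if_pos rfl, if_neg (show ¬ (2 * k = 0) by omega),
        if_neg (show ¬ (2 * k = k) by omega)] at hco
      simp at hco
  · rintro ⟨h1, h2⟩
    apply aux_irreducible n F g ?_ h2
    intro r hr hrn
    exact ⟨h1 r hr hrn, by rw [hog]⟩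
end

section
/- Let F be a finite field and let n ≥ 2 be a natural number. If there exists some g ∈ F such that x^n − g is irreducible over F, then for every generator g' of the cyclic group F^×, the binomial x^n − g' is irreducible over F. -/
-- v2 of q^m - 1 for m odd, q odd: equals v2(q-1)
lemma v2_pow_sub_one_odd {q m : ℕ} (hq : 2 ≤ q) (hqodd : ¬ 2 ∣ q) (hm : Odd m) :
    padicValNat 2 (q ^ m - 1) = padicValNat 2 (q - 1) := by
  have key : (q - 1) * ∑ i ∈ Finset.range m, q ^ i = q ^ m - 1 := by
    have h1 : (1:ℕ) ≤ q := by omega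
    have h2 : (1:ℕ) ≤ q ^ m := Nat.one_le_pow _ _ (by omega)
    have := geom_sum_mul (q : ℤ) m
    have : ((q:ℤ) - 1) * ∑ i ∈ Finset.range m, (q:ℤ) ^ i = (q:ℤ) ^ m - 1 := by
      rw [mul_comm]; exact this
    have := this
    zify [h1, h2]
    linarith [this]
  have hS : ¬ 2 ∣ ∑ i ∈ Finset.range m, q ^ i := by
    have : (∑ i ∈ Finset.range m, q ^ i) % 2 = (∑ i ∈ Finset.range m, q ^ i % 2) % 2 :=
      Finset.sum_nat_mod _ _ _
    have hq2 : ∀ i, q ^ i % 2 = 1 := fun i => Nat.odd_iff.mp ((Nat.odd_iff.mpr (by omega)).pow)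
    simp only [hq2] at this
    simp only [Finset.sum_const, Finset.card_range, smul_eq_mul, mul_one] at this
    rw [Nat.two_dvd_ne_zero, this, Nat.odd_iff.mp hm]
  rw [← key, padicValNat.mul (by omega) (fun h0 => hS (by rw [h0]; exact dvd_zero 2)),
    padicValNat.eq_zero_of_not_dvd hS, add_zero]

lemma nt_main {q n m N : ℕ} (hq : 2 ≤ q) (hn : n ≠ 0) (hm : m ≠ 0) (hN : N ≠ 0)
    (hprimes : ∀ p : ℕ, p.Prime → p ∣ n → p ∣ q - 1)
    (h4 : 4 ∣ n → 4 ∣ q - 1)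
    (hNeq : N = (q - 1) * Nat.gcd N n)
    (hNd : N ∣ q ^ m - 1) : n ∣ m := by
  have hq1 : q - 1 ≠ 0 := by omega
  have hqm1 : q ^ m - 1 ≠ 0 := by
    have : 2 ^ m ≤ q ^ m := Nat.pow_le_pow_left hq m
    have : 2 ≤ 2 ^ m := Nat.le_self_pow hm 2
    omega
  rw [← Nat.factorization_le_iff_dvd hn hm, Finsupp.le_def]
  intro p
  by_cases hpp : p.Prime
  swap
  · simp [Nat.factorization_eq_zero_of_not_prime _ hpp]
  set k := n.factorization p with hk
  rcases Nat.eq_zero_or_pos k with hk0 | hk0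
  · simp [← hk, hk0]
  have hpn : p ∣ n := Nat.dvd_of_factorization_pos (by omega)
  have hpq1 : p ∣ q - 1 := hprimes p hpp hpn
  have ha : 1 ≤ (q - 1).factorization p :=
    (Nat.Prime.factorization_pos_of_dvd hpp hq1 hpq1)
  set a := (q - 1).factorization p with hha
  -- t = a + k
  have hgcd0 : Nat.gcd N n ≠ 0 := Nat.gcd_ne_zero_right hn
  have ht : N.factorization p = a + min (N.factorization p) k := by
    conv_lhs => rw [hNeq]
    rw [Nat.factorization_mul hq1 hgcd0, Nat.factorization_gcd hN hn]
    simp [← hk, ← hha, Finsupp.inf_apply]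
  set t := N.factorization p with hht
  have htak : t = a + k := by omega
  have htle : t ≤ (q ^ m - 1).factorization p :=
    (Nat.factorization_le_iff_dvd hN hqm1).mpr hNd p
  -- now LTE
  have hppos : ¬ p ∣ q := by
    intro hd
    have := Nat.dvd_sub hd hpq1
    simp only [Nat.sub_sub_self (by omega : 1 ≤ q)] at this
    exact hpp.one_lt.ne' (Nat.eq_one_of_dvd_one this)
  have hfd : ∀ x : ℕ, x.factorization p = padicValNat p x := fun x => Nat.factorization_def x hpp
  rw [hfd] at htle
  rw [hfd]
  have hq1lt : (1:ℕ) < q := by omega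
  haveI : Fact p.Prime := ⟨hpp⟩
  by_cases hp2 : p = 2
  · subst hp2
    have hqodd : ¬ 2 ∣ q := hppos
    rcases Nat.even_or_odd m with hme | hmo
    · -- m even
      have hm2 : (2:ℕ) ∣ m := hme.two_dvd
      rcases Nat.lt_or_ge k 2 with hk1 | hk2
      · -- k = 1
        have h1m : 1 ≤ m.factorization 2 := Nat.Prime.factorization_pos_of_dvd Nat.prime_two hm hm2
        rw [hfd] at h1m
        omega
      · -- k ≥ 2, so 4 ∣ n, hence 4 ∣ q - 1
        have h4n : 4 ∣ n := by
          have : (2:ℕ) ^ k ∣ n := Nat.ordProj_dvd n 2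
          exact dvd_trans (by exact pow_dvd_pow 2 hk2) this
        have h4q : 4 ∣ q - 1 := h4 h4n
        have hq1mod : q % 4 = 1 := by omega
        have h2q1 : 2 ∣ q + 1 := by omega
        have hv1 : padicValNat 2 (q + 1) = 1 := by
          have hne : q + 1 ≠ 0 := by omega
          have h0 : padicValNat 2 (q + 1) ≠ 0 := by
            intro h0
            rw [padicValNat.eq_zero_iff] at h0
            rcases h0 with h | h | h <;> omega
          have hlt : padicValNat 2 (q + 1) < 2 := by
            by_contra hge
            push_neg at hge
            have : (2:ℕ) ^ 2 ∣ 2 ^ padicValNat 2 (q + 1) := pow_dvd_pow 2 hge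
            have : (4:ℕ) ∣ q + 1 := dvd_trans (by norm_num at this ⊢; exact this) pow_padicValNat_dvd
            omega
          omega
        have hlte := padicValNat.pow_two_sub_pow (x := q) (y := 1) (by omega) (by omega) hqodd hm hme
        simp only [one_pow, hv1] at hlte
        have haa : a = padicValNat 2 (q - 1) := hha.trans (hfd _)
        omega
    · -- m odd : contradiction
      have hlte := v2_pow_sub_one_odd hq hqodd hmo
      have haa : a = padicValNat 2 (q - 1) := hha.trans (hfd _)
      omega
  · -- p odd
    have hpodd : Odd p := hpp.odd_of_ne_two hp2
    have hlte := padicValNat.pow_sub_pow (p := p) hpodd (x := q) (y := 1) (by omega) (by omega) hppos hm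
    simp only [one_pow] at hlte
    have haa : a = padicValNat p (q - 1) := hha.trans (hfd _)
    omega

open Polynomial

lemma prime_dvd_card_sub_one {F : Type*} [Field F] [Fintype F] {p : ℕ} (hp : p.Prime) {g : F}
    (hg : ∀ b : F, b ^ p ≠ g) : p ∣ Fintype.card F - 1 := by
  classical
  by_contra hnd
  have hcop : (Nat.card Fˣ).Coprime p := by
    rw [Nat.card_eq_fintype_card, Fintype.card_units]
    exact (Nat.coprime_comm.mp (hp.coprime_iff_not_dvd.mpr hnd))
  rcases eq_or_ne g 0 with rfl | hg0
  · exact hg 0 (zero_pow hp.ne_zero)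
  · obtain ⟨b, hb⟩ := (hcop.pow_left_bijective).surjective (Units.mk0 g hg0)
    have hb' : b ^ p = Units.mk0 g hg0 := hb
    exact hg (b : F) (by rw [← Units.val_pow_eq_pow_val, hb', Units.val_mk0])

lemma not_unit_of_quadratic_like {F : Type*} [Field F] {l : ℕ} (hl : l ≠ 0) (c d : F) :
    ¬ IsUnit ((X : F[X]) ^ (2 * l) + C c * X ^ l + C d) := by
  intro hu
  obtain ⟨r, -, hr⟩ := Polynomial.isUnit_iff.mp hu
  have h1 : (C r).coeff (2 * l) = 0 := by rw [coeff_C, if_neg (by omega)]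
  have h2 : ((X : F[X]) ^ (2 * l) + C c * X ^ l + C d).coeff (2 * l) = 1 := by
    simp only [coeff_add, coeff_X_pow, coeff_C_mul, coeff_C]
    rw [if_pos trivial, if_neg (show ¬2 * l = l by omega), if_neg (show ¬2 * l = 0 by omega)]
    ring
  exact one_ne_zero (α := F) (by rw [← h2, ← hr, h1])

lemma four_dvd_card_sub_one {F : Type*} [Field F] [Fintype F] {n : ℕ} {g : F}
    (H : Irreducible ((X : F[X]) ^ n - C g)) (h4n : 4 ∣ n)
    (hqodd : Fintype.card F % 2 = 1) : 4 ∣ Fintype.card F - 1 := by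
  classical
  by_contra hq4
  have hq2 : 2 ≤ Fintype.card F := Fintype.one_lt_card
  have hq3 : Fintype.card F % 4 = 3 := by omega
  have hchar : ringChar F ≠ 2 := fun hc => by
    rw [FiniteField.even_card_iff_char_two] at hc
    omega
  have h2F : (2 : F) ≠ 0 := Ring.two_ne_zero hchar
  have hg2 : ∀ b : F, b ^ 2 ≠ g :=
    pow_ne_of_irreducible_X_pow_sub_C H (dvd_trans ⟨2, rfl⟩ h4n) (by norm_num)
  have hg0 : g ≠ 0 := fun h0 => hg2 0 (by rw [h0]; exact zero_pow (by norm_num))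
  have hgsq : ¬ IsSquare g := by
    rintro ⟨r, rfl⟩
    exact hg2 r (sq r)
  have hχ1 : quadraticChar F (-1) = -1 := by
    rw [quadraticChar_neg_one hchar]
    exact ZMod.χ₄_nat_three_mod_four hq3
  have hχg : quadraticChar F g = -1 := quadraticChar_neg_one_iff_not_isSquare.mpr hgsq
  have hsqng : IsSquare (-g) := by
    have : quadraticChar F (-g) = 1 := by
      rw [show -g = -1 * g by ring, map_mul, hχ1, hχg]; ring
    exact (quadraticChar_one_iff_isSquare (by simpa using hg0)).mp this
  obtain ⟨d, hd⟩ := hsqng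
  have hd0 : d ≠ 0 := by
    rintro rfl
    rw [mul_zero] at hd
    exact hg0 (by linear_combination -hd)
  -- one of d/2, -(d/2) is a square
  have hsq : IsSquare (d / 2) ∨ IsSquare (-(d / 2)) := by
    by_contra hboth
    push_neg at hboth
    have hd2 : d / 2 ≠ 0 := div_ne_zero hd0 h2F
    have h1 : quadraticChar F (d / 2) = -1 :=
      quadraticChar_neg_one_iff_not_isSquare.mpr hboth.1
    have h2 : quadraticChar F (-(d / 2)) = -1 :=
      quadraticChar_neg_one_iff_not_isSquare.mpr hboth.2
    rw [show -(d/2) = -1 * (d/2) by ring, map_mul, hχ1, h1] at h2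
    norm_num at h2
  obtain ⟨y, hy⟩ : ∃ y : F, y * y = d / 2 ∨ y * y = -(d / 2) := by
    rcases hsq with ⟨y, hy⟩ | ⟨y, hy⟩
    · exact ⟨y, Or.inl hy.symm⟩
    · exact ⟨y, Or.inr hy.symm⟩
  have hyg : (2 * (y * y)) * (2 * (y * y)) = -g := by
    have h2d : 2 * (y * y) = d ∨ 2 * (y * y) = -d := by
      rcases hy with hy | hy
      · left; rw [hy]; field_simp
      · right; rw [hy]; field_simp
    rcases h2d with h2d | h2d <;> rw [h2d] <;> linear_combination -hd
  -- factor X^n - C g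
  obtain ⟨l, hl⟩ := h4n
  have hn0' : n ≠ 0 := ne_zero_of_irreducible_X_pow_sub_C H
  have hl0 : l ≠ 0 := by rintro rfl; omega
  have hfact : (X : F[X]) ^ n - C g =
      ((X : F[X]) ^ (2 * l) + C (-(2 * y)) * X ^ l + C (2 * (y * y))) *
      ((X : F[X]) ^ (2 * l) + C (2 * y) * X ^ l + C (2 * (y * y))) := by
    have hg' : g = -((2 * (y * y)) * (2 * (y * y))) := by rw [hyg]; ring
    rw [hl, hg']
    have h1 : (X : F[X]) ^ (4 * l) = (X ^ l) ^ 4 := by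
      rw [← pow_mul, mul_comm]
    have h2 : (X : F[X]) ^ (2 * l) = (X ^ l) ^ 2 := by
      rw [← pow_mul, mul_comm]
    rw [h1, h2]
    simp only [map_neg, map_mul, map_ofNat]
    ring
  rcases H.isUnit_or_isUnit hfact with hu | hu
  · exact not_unit_of_quadratic_like hl0 _ _ hu
  · exact not_unit_of_quadratic_like hl0 _ _ hu

/-- If `F` is a finite field, `n ≥ 2`, and `x^n - g` is irreducible over `F`
for some `g ∈ F`, then `x^n - g'` is irreducible over `F` for every generator
`g'` of the cyclic group `Fˣ`. -/
theorem binomial_irreducible_of_exists_for_generator {F : Type*} [Field F] [Fintype F]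
    (n : ℕ) (hn : 2 ≤ n) (h : ∃ g : F, Irreducible ((X : F[X]) ^ n - C g)) :
    ∀ g' : Fˣ, (∀ x : Fˣ, x ∈ Subgroup.zpowers g') →
      Irreducible ((X : F[X]) ^ n - C (g' : F)) := by
  classical
  intro g' hg'
  obtain ⟨g, H⟩ := h
  have hq : 2 ≤ Fintype.card F := Fintype.one_lt_card
  have hn0 : n ≠ 0 := by omega
  have hnpos : 0 < n := by omega
  have hprimes : ∀ p : ℕ, p.Prime → p ∣ n → p ∣ Fintype.card F - 1 := fun p hp hpn =>
    prime_dvd_card_sub_one hp (pow_ne_of_irreducible_X_pow_sub_C H hpn hp.ne_one)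
  have h4 : 4 ∣ n → 4 ∣ Fintype.card F - 1 := by
    intro h4n
    have h2 : 2 ∣ Fintype.card F - 1 := hprimes 2 Nat.prime_two (dvd_trans ⟨2, rfl⟩ h4n)
    exact four_dvd_card_sub_one H h4n (by omega)
  set f : F[X] := X ^ n - C (g' : F) with hf
  have hfne : f ≠ 0 := X_pow_sub_C_ne_zero hnpos _
  have hfnu : ¬ IsUnit f := by
    rw [Polynomial.isUnit_iff_degree_eq_zero, degree_X_pow_sub_C hnpos]
    exact_mod_cast hn0
  obtain ⟨fi, hfi, hdvd⟩ := WfDvdMonoid.exists_irreducible_factor hfnu hfne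
  suffices hdeg : fi.natDegree = n by
    exact (associated_of_dvd_of_natDegree_le hdvd hfne
      ((hdeg.trans (natDegree_X_pow_sub_C (n := n) (r := (g' : F))).symm).ge)).irreducible hfi
  haveI : Fact (Irreducible fi) := ⟨hfi⟩
  have hfine : fi ≠ 0 := hfi.ne_zero
  set E := AdjoinRoot fi with hE
  let pb := AdjoinRoot.powerBasis hfine
  haveI : Fintype E := Module.fintypeOfFintype pb.basis
  have hm0 : fi.natDegree ≠ 0 :=
    (natDegree_pos_iff_degree_pos.mpr (degree_pos_of_irreducible hfi)).ne'
  have hcardE : Fintype.card E = Fintype.card F ^ fi.natDegree := by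
    rw [Module.card_eq_pow_finrank (K := F) (V := E), pb.finrank, AdjoinRoot.powerBasis_dim]
  have hroot : (AdjoinRoot.root fi) ^ n = algebraMap F E (g' : F) := by
    have := eval₂_eq_zero_of_dvd_of_eval₂_eq_zero (AdjoinRoot.of fi) (AdjoinRoot.root fi)
      hdvd (AdjoinRoot.eval₂_root fi)
    rw [hf] at this
    rw [eval₂_sub, eval₂_pow, eval₂_X, eval₂_C, sub_eq_zero] at this
    exact this
  have hg'0 : (g' : F) ≠ 0 := g'.ne_zero
  have hrne : AdjoinRoot.root fi ≠ 0 := by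
    intro h0
    apply hg'0
    have : algebraMap F E (g' : F) = 0 := by rw [← hroot, h0, zero_pow hn0]
    exact (map_eq_zero_iff _ (algebraMap F E).injective).mp this
  set u : Eˣ := Units.mk0 _ hrne with hu
  set w : Eˣ := Units.map (algebraMap F E : F →* E) g' with hw
  have huw : u ^ n = w := by
    ext
    simp [hu, hw, hroot]
  have hordw : orderOf w = Fintype.card F - 1 := by
    have h1 : orderOf g' = Fintype.card F - 1 := by
      rw [orderOf_eq_card_of_forall_mem_zpowers hg', Nat.card_eq_fintype_card,
        Fintype.card_units]
    rw [← h1, hw]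
    exact orderOf_injective _ (Units.map_injective (algebraMap F E).injective) g'
  have hNdvd : orderOf u ∣ Fintype.card F ^ fi.natDegree - 1 := by
    have := orderOf_dvd_card (x := u)
    rwa [Fintype.card_units, hcardE] at this
  have hNeq : orderOf u = (Fintype.card F - 1) * Nat.gcd (orderOf u) n := by
    have hpow := orderOf_pow (n := n) u
    rw [huw, hordw] at hpow
    have hgd : Nat.gcd (orderOf u) n ∣ orderOf u := Nat.gcd_dvd_left _ _
    rw [hpow, Nat.div_mul_cancel hgd]
  have hN0 : orderOf u ≠ 0 := (orderOf_pos u).ne'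
  have hmain : n ∣ fi.natDegree := nt_main hq hn0 hm0 hN0 hprimes h4 hNeq hNdvd
  have hle : fi.natDegree ≤ n :=
    (natDegree_le_of_dvd hdvd hfne).trans_eq natDegree_X_pow_sub_C
  exact Nat.le_antisymm hle (Nat.le_of_dvd (by omega) hmain)
end

section
/- Let K be a field such that for each natural number n ≥ 1, any two intermediate fields of the extension K ⊆ K̄ (a fixed algebraic closure of K) that have degree n over K are equal (i.e. K has a unique extension of each degree inside K̄). Suppose there exists g ∈ K such that for every natural number n ≥ 1 the binomial x^n − g is irreducible over K. For each n, let ⁿ√g ∈ K̄ denote a root of x^n − g. Then K̄ = K(ⁿ√g : n ∈ ℕ), i.e. the subfield of K̄ generated over K by the set {ⁿ√g : n ≥ 1} is all of K̄. -/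
open Polynomial

theorem aux_minpoly_root {K : Type*} [Field K] (g : K) (n : ℕ) (hn : 1 ≤ n)
    (hirr : Irreducible ((X : K[X]) ^ n - C g)) (x : AlgebraicClosure K)
    (hx : x ^ n = algebraMap K (AlgebraicClosure K) g) :
    minpoly K x = (X : K[X]) ^ n - C g := by
  refine (minpoly.eq_of_irreducible_of_monic hirr ?_ ?_).symm
  · simp [hx]
  · have : ((X : K[X]) ^ n).degree = n := by simp
    have hdeg : (C g).degree < ((X : K[X]) ^ n).degree := by
      rw [this]
      exact lt_of_le_of_lt (degree_C_le) (by exact_mod_cast Nat.cast_pos.mpr hn)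
    exact (monic_X_pow n).sub_of_left hdeg

/-- If `K` is a field having a unique extension of each degree inside a fixed
algebraic closure `K̄`, and `g ∈ K` is such that `x^n - g` is irreducible over
`K` for every `n ≥ 1`, with `r n` denoting a root of `x^n - g` in `K̄`, then
`K̄` is generated over `K` by the roots `{ⁿ√g : n ≥ 1}`. -/
theorem algebraicClosure_eq_adjoin_roots {K : Type*} [Field K]
    (huniq : ∀ n : ℕ, 1 ≤ n → ∀ L₁ L₂ : IntermediateField K (AlgebraicClosure K),
      Module.finrank K L₁ = n → Module.finrank K L₂ = n → L₁ = L₂)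
    (g : K) (hirr : ∀ n : ℕ, 1 ≤ n → Irreducible ((X : K[X]) ^ n - C g))
    (r : ℕ → AlgebraicClosure K)
    (hr : ∀ n : ℕ, 1 ≤ n → r n ^ n = algebraMap K (AlgebraicClosure K) g) :
    IntermediateField.adjoin K {x : AlgebraicClosure K | ∃ n : ℕ, 1 ≤ n ∧ x = r n} = ⊤ := by
  rw [eq_top_iff]
  rintro x -
  have hxint : IsIntegral K x := Algebra.IsIntegral.isIntegral x
  set m := Module.finrank K (IntermediateField.adjoin K {x}) with hm
  have hfin : FiniteDimensional K (IntermediateField.adjoin K ({x} : Set (AlgebraicClosure K))) :=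
    IntermediateField.adjoin.finiteDimensional hxint
  have hm1 : 1 ≤ m := Module.finrank_pos
  have hrint : IsIntegral K (r m) := Algebra.IsIntegral.isIntegral _
  have hfinr : FiniteDimensional K (IntermediateField.adjoin K ({r m} : Set (AlgebraicClosure K))) :=
    IntermediateField.adjoin.finiteDimensional hrint
  have hdeg : Module.finrank K (IntermediateField.adjoin K ({r m} : Set (AlgebraicClosure K))) = m := by
    rw [IntermediateField.adjoin.finrank hrint,
      aux_minpoly_root g m hm1 (hirr m hm1) (r m) (hr m hm1)]
    rw [natDegree_sub_C, natDegree_X_pow]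
  have heq : IntermediateField.adjoin K ({x} : Set (AlgebraicClosure K)) =
      IntermediateField.adjoin K ({r m} : Set (AlgebraicClosure K)) :=
    huniq m hm1 _ _ hm.symm hdeg
  have hx : x ∈ IntermediateField.adjoin K ({r m} : Set (AlgebraicClosure K)) := by
    rw [← heq]; exact IntermediateField.mem_adjoin_simple_self K x
  refine IntermediateField.adjoin_le_iff.mpr ?_ hx
  intro y hy
  rcases Set.mem_singleton_iff.mp hy with rfl
  exact IntermediateField.subset_adjoin K _ ⟨m, hm1, rfl⟩
end

section
/- Let 𝒰 be a nonprincipal ultrafilter on ℕ, let (F_k)_{k∈ℕ} be a family of finite fields with |F_k| = q_k, and let n ≥ 2 be a natural number with prime divisors p₁, …, p_r. Then the set {k ∈ ℕ : there exists g ∈ F_k such that x^n − g is irreducible over F_k} belongs to 𝒰 if and only if the set {k ∈ ℕ : p₁, …, p_r all divide q_k − 1, and if 4 ∣ n then 4 ∣ q_k − 1} belongs to 𝒰. -/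
open Polynomial Finset IntermediateField

private lemma two_dvd_aux {q d : ℕ} (hq2 : 2 ∣ q - 1) (hq : 2 ≤ q) (hd : d ≠ 0)
    (hdvd : 2 * (q - 1) ∣ q ^ d - 1) : 2 ∣ d := by
  have hq3 : 3 ≤ q := by
    rcases hq2 with ⟨c, hc⟩; omega
  have hq1 : (1:ℕ) ≤ q := by omega
  have hqd : (1:ℕ) ≤ q ^ d := Nat.one_le_pow _ _ (by omega)
  have hcast1 : ((q - 1 : ℕ) : ℤ) = (q:ℤ) - 1 := by push_cast [hq1]; ring
  have hcast2 : ((q ^ d - 1 : ℕ) : ℤ) = (q:ℤ) ^ d - 1 := by push_cast [hqd]; ring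
  have hZ : (2 * ((q:ℤ) - 1)) ∣ ((q:ℤ) ^ d - 1) := by
    have := Int.natCast_dvd_natCast.mpr hdvd
    rwa [Nat.cast_mul, hcast1, hcast2, Nat.cast_ofNat] at this
  set S : ℤ := ∑ i ∈ range d, (q:ℤ) ^ i with hS
  have hgeom : S * ((q:ℤ) - 1) = (q:ℤ) ^ d - 1 := geom_sum_mul _ _
  obtain ⟨c, hc⟩ := hZ
  have hq0 : (q:ℤ) - 1 ≠ 0 := by
    have : (3:ℤ) ≤ (q:ℤ) := by exact_mod_cast hq3
    omega
  have hSc : S = 2 * c := by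
    apply mul_right_cancel₀ hq0
    rw [hgeom, hc]; ring
  have h2S : (2:ℤ) ∣ S := ⟨c, hSc⟩
  have hmod : ((S : ZMod 2)) = (d : ZMod 2) := by
    have hqodd : q % 2 = 1 := by omega
    have hq2' : ((q : ℕ) : ZMod 2) = 1 := by
      rw [← ZMod.natCast_mod q 2, hqodd, Nat.cast_one]
    rw [hS]
    push_cast
    rw [Finset.sum_congr rfl (fun i _ => by rw [hq2', one_pow])]
    simp
  have : (d : ZMod 2) = 0 := by
    rw [← hmod]
    exact (ZMod.intCast_zmod_eq_zero_iff_dvd S 2).mpr (by exact_mod_cast h2S)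
  exact (ZMod.natCast_eq_zero_iff d 2).mp this

private lemma nt_key {q n d : ℕ} (hq : 2 ≤ q) (hn : n ≠ 0) (hd : d ≠ 0)
    (hcond : ∀ l : ℕ, l.Prime → l ∣ n → l ∣ q - 1)
    (h4 : 4 ∣ n → 4 ∣ q - 1)
    (hdvd : n * (q - 1) ∣ q ^ d - 1) : n ∣ d := by
  have hq1 : (1:ℕ) ≤ q := by omega
  have hqd1 : (1:ℕ) < q ^ d :=
    Nat.one_lt_pow hd (by omega)
  have hqd0 : q ^ d - 1 ≠ 0 := by omega
  rw [← Nat.factorization_le_iff_dvd hn hd, Finsupp.le_iff]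
  intro l hl
  have hlp : l.Prime := Nat.prime_of_mem_primeFactors (by rwa [Nat.support_factorization] at hl)
  have hldvdn : l ∣ n := Nat.dvd_of_mem_primeFactors (by rwa [Nat.support_factorization] at hl)
  have hlq1 : l ∣ q - 1 := hcond l hlp hldvdn
  have hl2le : 2 ≤ l := hlp.two_le
  have hlnq : ¬ l ∣ q := by
    intro h
    have h1 : l ∣ q - (q - 1) := Nat.dvd_sub h hlq1
    rw [Nat.sub_sub_self hq1] at h1
    have := Nat.le_of_dvd one_pos h1
    omega
  have hq10 : q - 1 ≠ 0 := by
    intro h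
    rw [h] at hlq1
    have := Nat.le_of_dvd (by omega) hlq1
    omega
  set v := n.factorization l with hv
  set w := (q-1).factorization l with hw
  -- l^(v+w) divides q^d - 1
  have hkey : v + w ≤ (q ^ d - 1).factorization l := by
    rw [← hlp.pow_dvd_iff_le_factorization hqd0, pow_add]
    exact dvd_trans (mul_dvd_mul (Nat.ordProj_dvd n l) (Nat.ordProj_dvd (q-1) l)) hdvd
  haveI : Fact l.Prime := ⟨hlp⟩
  have hfact_eq : ∀ x : ℕ, x ≠ 0 → x.factorization l = padicValNat l x := fun x _ =>
    Nat.factorization_def x hlp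
  show v ≤ d.factorization l
  rcases hlp.eq_two_or_odd' with hl2 | hlodd
  · -- l = 2
    subst hl2
    have h2d : 2 ∣ d :=
      two_dvd_aux hlq1 hq hd (dvd_trans (mul_dvd_mul hldvdn dvd_rfl) hdvd)
    rcases Nat.lt_or_ge v 2 with hvlt | hvge
    · -- v ≤ 1, enough that 2 ∣ d
      have : 1 ≤ d.factorization 2 := by
        rw [← Nat.Prime.pow_dvd_iff_le_factorization Nat.prime_two hd, pow_one]
        exact h2d
      omega
    · -- v ≥ 2, so 4 ∣ n, so 4 ∣ q - 1
      have h4n : 4 ∣ n := by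
        have : 2 ^ 2 ∣ n := by
          rw [Nat.Prime.pow_dvd_iff_le_factorization Nat.prime_two hn]
          exact hvge
        simpa using this
      have h4q : 4 ∣ q - 1 := h4 h4n
      have hq5 : 5 ≤ q := by
        have := Nat.le_of_dvd (by omega) h4q
        omega
      have hqodd : ¬ 2 ∣ q := hlnq
      have hval2 : padicValNat 2 (q ^ d - 1) + 1 =
          padicValNat 2 (q + 1) + padicValNat 2 (q - 1) + padicValNat 2 d := by
        have := padicValNat.pow_two_sub_pow (x := q) (y := 1) (by omega) (by simpa using hlq1)
          hqodd hd (even_iff_two_dvd.mpr h2d)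
        simpa using this
      have hvq1 : padicValNat 2 (q + 1) = 1 := by
        have h2q1 : 2 ∣ q + 1 := by
          rcases h4q with ⟨c, hc⟩; omega
        have h4q1 : ¬ 4 ∣ q + 1 := by
          rcases h4q with ⟨c, hc⟩
          rintro ⟨e, he⟩
          omega
        have hle : padicValNat 2 (q + 1) ≤ 1 := by
          by_contra hgt
          exact h4q1 (by
            have : 2 ^ 2 ∣ 2 ^ padicValNat 2 (q + 1) := pow_dvd_pow 2 (by omega)
            simpa using this.trans (pow_padicValNat_dvd))
        have hge : 1 ≤ padicValNat 2 (q + 1) :=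
          one_le_padicValNat_of_dvd (by omega) h2q1
        omega
      rw [hfact_eq _ hqd0, hw, hfact_eq _ hq10] at hkey
      rw [hfact_eq _ hd]
      omega
  · -- l odd
    have hval : padicValNat l (q ^ d - 1) = padicValNat l (q - 1) + padicValNat l d := by
      have := padicValNat.pow_sub_pow (p := l) hlodd (x := q) (y := 1) (by omega)
        (by simpa using hlq1) hlnq hd
      simpa using this
    rw [hfact_eq _ hqd0, hw, hfact_eq _ hq10, hval] at hkey
    rw [hfact_eq _ hd]
    omega

private lemma pow_surj_of_not_dvd {K : Type*} [Field K] [Fintype K] {l : ℕ} (hl : l.Prime)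
    (hnd : ¬ l ∣ Fintype.card K - 1) (g : K) : ∃ b : K, b ^ l = g := by
  classical
  rcases eq_or_ne g 0 with rfl | hg
  · exact ⟨0, zero_pow hl.ne_zero⟩
  · have hcop : (Nat.card Kˣ).Coprime l := by
      rw [Nat.card_eq_fintype_card, Fintype.card_units]
      exact ((hl.coprime_iff_not_dvd).mpr hnd).symm
    obtain ⟨u, hu⟩ := (powCoprime hcop).surjective (Units.mk0 g hg)
    exact ⟨(u : K), by
      have : ((u ^ l : Kˣ) : K) = ((Units.mk0 g hg : Kˣ) : K) := by rw [← hu]; rfl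
      simpa using this⟩

private lemma fwd_lemma {K : Type*} [Field K] [Fintype K] {n : ℕ} (hn : 2 ≤ n) {g : K}
    (hirr : Irreducible ((X : K[X]) ^ n - C g)) :
    (∀ l : ℕ, l.Prime → l ∣ n → l ∣ Fintype.card K - 1) ∧
      (4 ∣ n → 4 ∣ Fintype.card K - 1) := by
  have hq2 : 2 ≤ Fintype.card K := Fintype.one_lt_card
  have hprime : ∀ l : ℕ, l.Prime → l ∣ n → l ∣ Fintype.card K - 1 := by
    intro l hl hln
    by_contra hnd
    obtain ⟨b, hb⟩ := pow_surj_of_not_dvd hl hnd g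
    exact pow_ne_of_irreducible_X_pow_sub_C hirr hln hl.ne_one b hb
  refine ⟨hprime, fun h4n => ?_⟩
  by_contra h4q
  have h2q : 2 ∣ Fintype.card K - 1 := hprime 2 Nat.prime_two (dvd_trans ⟨2, rfl⟩ h4n)
  have hqmod : Fintype.card K % 4 = 3 := by omega
  have hchar : ringChar K ≠ 2 := by
    intro h
    have := (FiniteField.even_card_iff_char_two (F := K)).mp h
    omega
  have hne2 : ∀ b : K, b ^ 2 ≠ g :=
    pow_ne_of_irreducible_X_pow_sub_C hirr (dvd_trans ⟨2, rfl⟩ h4n) (by omega)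
  have hg0 : g ≠ 0 := fun h => hne2 0 (by rw [h]; simp)
  have hgsq : ¬ IsSquare g := by
    rintro ⟨c, rfl⟩
    exact hne2 c (by ring)
  have hneg1 : ¬ IsSquare (-1 : K) := by
    rw [FiniteField.isSquare_neg_one_iff]
    simp [hqmod]
  classical
  -- -g is a square
  have hproduct : ∀ a : K, a ≠ 0 → ¬ IsSquare a → IsSquare (-a) := by
    intro a ha hna
    have h1 : quadraticChar K a = -1 := quadraticChar_neg_one_iff_not_isSquare.mpr hna
    have h2 : quadraticChar K (-1) = -1 := quadraticChar_neg_one_iff_not_isSquare.mpr hneg1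
    have h3 : quadraticChar K (-a) = 1 := by
      rw [show (-a : K) = -1 * a by ring, map_mul, h1, h2]; ring
    exact (quadraticChar_one_iff_isSquare (by simpa using ha)).mp h3
  obtain ⟨c, hc⟩ := hproduct g hg0 hgsq
  have hc0 : c ≠ 0 := by
    rintro rfl
    simp at hc
    exact hg0 (by simpa using hc)
  have h2K : (2 : K) ≠ 0 := Ring.two_ne_zero hchar
  -- find b with 4 * b ^ 4 = -g
  obtain ⟨b, hb⟩ : ∃ b : K, b * b = c / 2 ∨ b * b = -(c / 2) := by
    by_cases hsq : IsSquare (c / 2 : K)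
    · obtain ⟨b, hb⟩ := hsq
      exact ⟨b, Or.inl hb.symm⟩
    · obtain ⟨b, hb⟩ := hproduct (c / 2) (div_ne_zero hc0 h2K) hsq
      exact ⟨b, Or.inr hb.symm⟩
  have hbg : g = -(4 * b ^ 4) := by
    have h1 : b ^ 4 = (c / 2) ^ 2 := by
      rcases hb with hb | hb
      · have : (b * b) ^ 2 = (c / 2) ^ 2 := by rw [hb]
        calc b ^ 4 = (b * b) ^ 2 := by ring
        _ = (c / 2) ^ 2 := this
      · have : (b * b) ^ 2 = (-(c / 2)) ^ 2 := by rw [hb]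
        calc b ^ 4 = (b * b) ^ 2 := by ring
        _ = (c / 2) ^ 2 := by rw [this]; ring
    have h2 : (4:K) * (c/2)^2 = c^2 := by field_simp; ring
    rw [h1, show -(4 * (c / 2) ^ 2 : K) = -(c^2) by rw [← h2], ]
    linear_combination -hc
  -- factor X^n - C g
  obtain ⟨m, rfl⟩ := h4n
  have hm : m ≠ 0 := by rintro rfl; omega
  set f₁ : K[X] := X ^ (2 * m) - 2 * C b * X ^ m + 2 * C b ^ 2 with hf₁
  set f₂ : K[X] := X ^ (2 * m) + 2 * C b * X ^ m + 2 * C b ^ 2 with hf₂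
  have hfact : (X : K[X]) ^ (4 * m) - C g = f₁ * f₂ := by
    have hCg : C g = -(4 * C b ^ 4) := by
      rw [hbg]; push_cast [map_neg, map_mul, map_pow, map_ofNat]; ring
    have e1 : (X : K[X]) ^ (4 * m) = (X ^ m) ^ 4 := by rw [← pow_mul, mul_comm]
    have e2 : (X : K[X]) ^ (2 * m) = (X ^ m) ^ 2 := by rw [← pow_mul, mul_comm]
    rw [hCg, hf₁, hf₂, e1, e2]
    ring
  have hdeg : ∀ s : K, (X ^ (2 * m) + C s * X ^ m + C (2 * b ^ 2) : K[X]).natDegree = 2 * m := by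
    intro s
    compute_degree!
    · rw [if_neg (by omega), if_neg (by omega)]; simp
    all_goals omega
  rcases hirr.isUnit_or_isUnit hfact with hu | hu
  · refine not_isUnit_of_natDegree_pos f₁ ?_ hu
    have : f₁ = X ^ (2 * m) + C (-(2*b)) * X ^ m + C (2 * b ^ 2) := by
      rw [hf₁]; push_cast [map_neg, map_mul, map_pow, map_ofNat]; ring
    rw [this, hdeg]
    omega
  · refine not_isUnit_of_natDegree_pos f₂ ?_ hu
    have : f₂ = X ^ (2 * m) + C (2*b) * X ^ m + C (2 * b ^ 2) := by
      rw [hf₂]; push_cast [map_mul, map_pow, map_ofNat]; ring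
    rw [this, hdeg]
    omega

private lemma rev_lemma {K : Type*} [Field K] [Fintype K] {n : ℕ} (hn : 2 ≤ n)
    (h1 : ∀ l : ℕ, l.Prime → l ∣ n → l ∣ Fintype.card K - 1)
    (h2 : 4 ∣ n → 4 ∣ Fintype.card K - 1) :
    ∃ g : K, Irreducible ((X : K[X]) ^ n - C g) := by
  classical
  have hq2 : 2 ≤ Fintype.card K := Fintype.one_lt_card
  set q := Fintype.card K with hqdef
  set Ω := AlgebraicClosure K with hΩ
  set p₀ := ringChar K with hp₀def
  haveI hp₀inst : CharP K p₀ := ringChar.charP K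
  have hp₀ : p₀.Prime := CharP.char_is_prime K p₀
  have hp₀q : p₀ ∣ q := by
    rw [← CharP.cast_eq_zero_iff K p₀ q]
    exact FiniteField.cast_card_eq_zero K
  have hdvd_aux : ∀ l : ℕ, l.Prime → l ∣ q → ¬ l ∣ q - 1 := by
    intro l hl hlq h
    have h' : l ∣ q - (q - 1) := Nat.dvd_sub hlq h
    rw [Nat.sub_sub_self (by omega)] at h'
    exact hl.one_lt.ne' (Nat.dvd_one.mp h')
  have hp₀n : ¬ p₀ ∣ n := fun h => hdvd_aux p₀ hp₀ hp₀q (h1 p₀ hp₀ h)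
  have hp₀q1 : ¬ p₀ ∣ q - 1 := hdvd_aux p₀ hp₀ hp₀q
  set m := n * (q - 1) with hm
  have hq10 : q - 1 ≠ 0 := by omega
  have hn0 : n ≠ 0 := by omega
  have hm0 : m ≠ 0 := by positivity
  haveI : CharP Ω p₀ := charP_of_injective_algebraMap (algebraMap K Ω).injective p₀
  haveI : NeZero ((m : ℕ) : Ω) := by
    refine ⟨?_⟩
    rw [Ne, CharP.cast_eq_zero_iff Ω p₀ m]
    intro h
    rcases (Nat.Prime.prime hp₀).dvd_mul.mp (hm ▸ h) with h' | h'
    · exact hp₀n h'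
    · exact hp₀q1 h'
  -- get a primitive m-th root of unity ζ in Ω
  obtain ⟨ζ, hζroot⟩ := IsAlgClosed.exists_root (cyclotomic m Ω)
    (degree_cyclotomic_pos m Ω (Nat.pos_of_ne_zero hm0)).ne'
  have hζ : IsPrimitiveRoot ζ m := isRoot_cyclotomic_iff.mp hζroot
  have horder : orderOf ζ = m := hζ.eq_orderOf.symm
  have hζ0 : ζ ≠ 0 := by
    rintro rfl
    have := hζ.pow_eq_one
    rw [zero_pow hm0] at this
    exact zero_ne_one this
  -- ζ^n has order q - 1 hence lies in the image of K
  have horderpow : orderOf (ζ ^ n) = q - 1 := by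
    rw [orderOf_pow' ζ hn0, horder, hm]
    have : (n * (q - 1)).gcd n = n := by
      conv_lhs => rw [show n = n * 1 from (mul_one n).symm]
      rw [show n * 1 * (q-1) = n * (q-1) by ring, Nat.gcd_mul_left, Nat.gcd_one_right, mul_one]
    rw [this, Nat.mul_div_cancel_left _ (Nat.pos_of_ne_zero hn0)]
  have hpowq : (ζ ^ n) ^ q = ζ ^ n := by
    have h1' : (ζ ^ n) ^ (q - 1) = 1 := by
      rw [← horderpow]; exact pow_orderOf_eq_one _
    calc (ζ ^ n) ^ q = (ζ ^ n) ^ (q - 1 + 1) := by rw [Nat.sub_add_cancel (by omega)]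
    _ = (ζ ^ n) ^ (q - 1) * (ζ ^ n) := by rw [pow_succ]
    _ = ζ ^ n := by rw [h1']; ring
  -- the fixed points of x ↦ x^q are exactly the image of K
  obtain ⟨g, hg⟩ : ∃ g : K, algebraMap K Ω g = ζ ^ n := by
    set P : Polynomial Ω := (X : Polynomial Ω) ^ q - X with hP
    have hPdeg : P.degree = q := by
      have hlt : (X : Polynomial Ω).degree < ((X : Polynomial Ω) ^ q).degree := by
        rw [degree_X, degree_X_pow]
        exact_mod_cast (by omega : (1:ℕ) < q)
      rw [hP, degree_sub_eq_left_of_degree_lt hlt, degree_X_pow]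
    have hP0 : P ≠ 0 := fun h => by rw [h, degree_zero] at hPdeg; simp at hPdeg
    set s : Finset Ω := Finset.univ.image (algebraMap K Ω) with hs
    have hscard : s.card = q := by
      rw [hs, Finset.card_image_of_injective _ (algebraMap K Ω).injective, Finset.card_univ]
    have hsub : s ⊆ P.roots.toFinset := by
      intro x hx
      rw [hs, Finset.mem_image] at hx
      obtain ⟨y, _, rfl⟩ := hx
      rw [Multiset.mem_toFinset, mem_roots hP0]
      rw [hP]
      simp only [IsRoot, eval_sub, eval_pow, eval_X]
      rw [← map_pow, FiniteField.pow_card, sub_self]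
    have hle : P.roots.toFinset.card ≤ q := by
      calc P.roots.toFinset.card ≤ Multiset.card P.roots := Multiset.toFinset_card_le _
      _ ≤ P.natDegree := P.card_roots' 
      _ = q := by rw [natDegree_eq_of_degree_eq_some hPdeg]
    have heq : s = P.roots.toFinset := Finset.eq_of_subset_of_card_le hsub (by omega)
    have hmem : ζ ^ n ∈ P.roots.toFinset := by
      rw [Multiset.mem_toFinset, mem_roots hP0, hP]
      simp only [IsRoot, eval_sub, eval_pow, eval_X]
      rw [hpowq, sub_self]
    rw [← heq, hs, Finset.mem_image] at hmem
    obtain ⟨y, _, hy⟩ := hmem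
    exact ⟨y, hy⟩
  -- minimal polynomial of ζ over K
  have hint : IsIntegral K ζ :=
    ⟨X ^ n - C g, monic_X_pow_sub_C g hn0, by
      simp only [eval₂_sub, eval₂_pow, eval₂_X, eval₂_C]
      rw [hg, sub_self]⟩
  have hdvd : minpoly K ζ ∣ X ^ n - C g := minpoly.dvd K ζ (by
    simp only [aeval_def, eval₂_sub, eval₂_pow, eval₂_X, eval₂_C]
    rw [hg, sub_self])
  set d := (minpoly K ζ).natDegree with hd
  have hd_le : d ≤ n := by
    have := natDegree_le_of_dvd hdvd (X_pow_sub_C_ne_zero (by omega) g)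
    rwa [natDegree_X_pow_sub_C] at this
  have hd_pos : 0 < d := minpoly.natDegree_pos hint
  -- the subfield K(ζ) has q^d elements
  haveI : FiniteDimensional K K⟮ζ⟯ := IntermediateField.adjoin.finiteDimensional hint
  haveI : Finite K⟮ζ⟯ := Module.finite_of_finite K
  haveI : Fintype K⟮ζ⟯ := Fintype.ofFinite _
  have hcard : Fintype.card K⟮ζ⟯ = q ^ d := by
    rw [Module.card_eq_pow_finrank (K := K) (V := K⟮ζ⟯), IntermediateField.adjoin.finrank hint]
  set β : K⟮ζ⟯ := AdjoinSimple.gen K ζ with hβ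
  have hβcoe : (algebraMap K⟮ζ⟯ Ω) β = ζ := rfl
  have horderβ : orderOf β = m := by
    have h' := orderOf_injective (algebraMap K⟮ζ⟯ Ω).toMonoidHom
      (algebraMap K⟮ζ⟯ Ω).injective β
    rw [show (algebraMap K⟮ζ⟯ Ω).toMonoidHom β = ζ from hβcoe] at h'
    rw [← h', horder]
  have hβ0 : β ≠ 0 := by
    intro h
    apply hζ0
    rw [← hβcoe, h, map_zero]
  have hdvd2 : m ∣ q ^ d - 1 := by
    rw [← horderβ]
    apply orderOf_dvd_of_pow_eq_one
    have := FiniteField.pow_card_sub_one_eq_one β hβ0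
    rwa [hcard] at this
  -- conclude d = n
  have hnd : n ∣ d := nt_key hq2 hn0 (by omega) h1 h2 hdvd2
  have hdn : d = n := le_antisymm hd_le (Nat.le_of_dvd hd_pos hnd)
  have hmin : X ^ n - C g = minpoly K ζ := by
    apply eq_of_monic_of_dvd_of_natDegree_le (minpoly.monic hint) (monic_X_pow_sub_C g hn0) hdvd
    rw [natDegree_X_pow_sub_C, ← hd, hdn]
  exact ⟨g, hmin ▸ minpoly.irreducible hint⟩

/-- The finite-level content of (2) ⇔ (3) in the criterion for irreducibility
of binomials over an ultraproduct of finite fields: given a nonprincipal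
ultrafilter `𝒰` on `ℕ`, finite fields `F k` with `q k` elements, and `n ≥ 2`
whose prime divisors are `p 0, …, p (r-1)`, the set of `k` for which some
binomial `x^n - g` is irreducible over `F k` lies in `𝒰` iff the set of `k`
for which all `p i` divide `q k - 1` (and `4 ∣ q k - 1` whenever `4 ∣ n`)
lies in `𝒰`. -/
theorem ultrafilter_binomial_irreducible_iff
    (𝒰 : Ultrafilter ℕ) (h𝒰 : ∀ s : Set ℕ, s.Finite → s ∉ 𝒰)
    (F : ℕ → Type*) [∀ k, Field (F k)] [∀ k, Fintype (F k)]
    (q : ℕ → ℕ) (hq : ∀ k, Fintype.card (F k) = q k)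
    (n : ℕ) (hn : 2 ≤ n)
    (r : ℕ) (p : Fin r → ℕ)
    (hp : ∀ m : ℕ, (m.Prime ∧ m ∣ n) ↔ m ∈ Set.range p) :
    {k : ℕ | ∃ g : F k, Irreducible ((X : (F k)[X]) ^ n - C g)} ∈ 𝒰 ↔
      {k : ℕ | (∀ i : Fin r, p i ∣ q k - 1) ∧ (4 ∣ n → 4 ∣ q k - 1)} ∈ 𝒰 := by
  have hset : {k : ℕ | ∃ g : F k, Irreducible ((X : (F k)[X]) ^ n - C g)} =
      {k : ℕ | (∀ i : Fin r, p i ∣ q k - 1) ∧ (4 ∣ n → 4 ∣ q k - 1)} := by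
    ext k
    simp only [Set.mem_setOf_eq]
    constructor
    · rintro ⟨g, hg⟩
      obtain ⟨ha, hb⟩ := fwd_lemma hn hg
      rw [hq k] at ha hb
      exact ⟨fun i => ha (p i) (((hp (p i)).mpr ⟨i, rfl⟩).1) (((hp (p i)).mpr ⟨i, rfl⟩).2), hb⟩
    · rintro ⟨ha, hb⟩
      apply rev_lemma hn
      · intro l hl hln
        obtain ⟨i, rfl⟩ := (hp l).mp ⟨hl, hln⟩
        rw [hq k]
        exact ha i
      · rw [hq k]
        exact hb
  rw [hset]
end
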